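/- arXiv:1606.01680 — 5 statements merged into one kernel-verified Lean document; each statement's English description precedes it below -/
import Mathlib

section
/- Let k ≥ 2 and ℓ ≥ 1 be integers, let d = (k−1)·ℓ, and fix 0 < ε < 1/d. For i ∈ {1, …, ℓ} let M_i be the d × d diagonal matrix whose j-th diagonal entry equals 1 if (k−1)(i−1)+1 ≤ j ≤ (k−1)i and equals ε otherwise. Then for every nonzero d × d real matrix A there exists i ∈ {1, …, ℓ} such that the largest eigenvalue of AᵀM_iA is strictly greater than (1/k)·Tr(AᵀM_iA). -/
open Matrix

/-- The eigenvalues of a Hermitian (real symmetric) matrix, listed in decreasing order: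
index `i` gives the `(i+1)`-th largest eigenvalue. For non-Hermitian matrices we return `0`. -/
noncomputable def sortedEigs {d : ℕ} (M : Matrix (Fin d) (Fin d) ℝ) : Fin d → ℝ :=
  if h : M.IsHermitian then
    fun i => (h.eigenvalues ∘ Tuple.sort h.eigenvalues) i.rev
  else fun _ => 0

lemma sum_eigs_eq_trace {n : Type*} [Fintype n] [DecidableEq n] {A : Matrix n n ℝ}
    (hA : A.IsHermitian) : ∑ i, hA.eigenvalues i = A.trace := by
  nth_rewrite 2 [hA.spectral_theorem]
  rw [Unitary.conjStarAlgAut_apply, Matrix.trace_mul_cycle]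
  rw [(Matrix.mem_unitaryGroup_iff').mp hA.eigenvectorUnitary.2]
  simp [Matrix.trace_diagonal]

lemma rayleigh_le {n : Type*} [Fintype n] [DecidableEq n] {A : Matrix n n ℝ} (hA : A.IsHermitian)
    {lam : ℝ} (hlam : ∀ i, hA.eigenvalues i ≤ lam) (x : n → ℝ) :
    x ⬝ᵥ (A *ᵥ x) ≤ lam * (x ⬝ᵥ x) := by
  set U : Matrix n n ℝ := (hA.eigenvectorUnitary : Matrix n n ℝ) with hUdef
  have hU1 : U * star U = 1 := (Matrix.mem_unitaryGroup_iff).mp hA.eigenvectorUnitary.2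
  set y : n → ℝ := star U *ᵥ x with hy
  have key : ∀ z : n → ℝ, x ⬝ᵥ (U *ᵥ z) = y ⬝ᵥ z := by
    intro z
    rw [hy, Matrix.star_eq_conjTranspose, Matrix.conjTranspose_eq_transpose_of_trivial,
      Matrix.mulVec_transpose, dotProduct_mulVec]
  have hxx : x ⬝ᵥ x = y ⬝ᵥ y := by
    nth_rewrite 2 [show x = (U * star U) *ᵥ x by rw [hU1, Matrix.one_mulVec]]
    rw [← Matrix.mulVec_mulVec, key]
  have hAx : x ⬝ᵥ (A *ᵥ x) = ∑ i, hA.eigenvalues i * (y i)^2 := by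
    nth_rewrite 1 [hA.spectral_theorem]
    rw [Unitary.conjStarAlgAut_apply, ← hUdef, Matrix.mul_assoc, ← Matrix.mulVec_mulVec, key, ← Matrix.mulVec_mulVec]
    simp [dotProduct, Matrix.mulVec_diagonal]
    exact Finset.sum_congr rfl fun i _ => by rw [← hy]; ring
  rw [hAx, hxx]
  simp only [dotProduct, Finset.mul_sum]
  apply Finset.sum_le_sum
  intro i _
  have := sq_nonneg (y i)
  nlinarith [hlam i]

lemma block_sum {κ ℓ d : ℕ} (hκ : 0 < κ) (i : Fin ℓ)
    (emb : Fin κ → Fin d) (hemb : ∀ a : Fin κ, (emb a).val = κ * i.val + a.val)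
    (g : Fin d → ℝ) :
    ∑ j : Fin d, (if κ * i.val ≤ j.val ∧ j.val < κ * (i.val + 1) then g j else 0)
      = ∑ a : Fin κ, g (emb a) := by
  have hm : κ * (i.val + 1) = κ * i.val + κ := by ring
  rw [← Finset.sum_filter]
  apply Finset.sum_nbij' (i := fun j => (⟨(j.val - κ * i.val) % κ, Nat.mod_lt _ hκ⟩ : Fin κ))
    (j := emb)
  · intro j hj
    exact Finset.mem_univ _
  · intro a _
    simp only [Finset.mem_filter, Finset.mem_univ, true_and, hemb, hm]
    have := a.isLt
    omega
  · intro j hj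
    simp only [Finset.mem_filter, Finset.mem_univ, true_and, hm] at hj
    apply Fin.ext
    rw [hemb]
    simp only
    rw [Nat.mod_eq_of_lt (by omega)]
    omega
  · intro a _
    apply Fin.ext
    simp only [hemb]
    rw [Nat.add_sub_cancel_left, Nat.mod_eq_of_lt a.isLt]
  · intro j hj
    simp only [Finset.mem_filter, Finset.mem_univ, true_and, hm] at hj
    congr 1
    apply Fin.ext
    rw [hemb]
    simp only
    rw [Nat.mod_eq_of_lt (by omega)]
    omega

lemma sortedEigs_zero_max {d : ℕ} (hd : 0 < d) {N : Matrix (Fin d) (Fin d) ℝ}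
    (hN : N.IsHermitian) :
    (∃ j, sortedEigs N ⟨0, hd⟩ = hN.eigenvalues j) ∧
      ∀ i, hN.eigenvalues i ≤ sortedEigs N ⟨0, hd⟩ := by
  rw [sortedEigs, dif_pos hN]
  set σ := Tuple.sort hN.eigenvalues with hσ
  have hmono : Monotone (hN.eigenvalues ∘ σ) := Tuple.monotone_sort hN.eigenvalues
  constructor
  · exact ⟨σ ((⟨0, hd⟩ : Fin d).rev), rfl⟩
  · intro i
    have : hN.eigenvalues i = (hN.eigenvalues ∘ σ) (σ.symm i) := by simp
    rw [this]
    apply hmono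
    have h1 : ((⟨0, hd⟩ : Fin d).rev).val = d - 1 := by simp [Fin.rev]
    have h2 := (σ.symm i).isLt
    rw [Fin.le_def, h1]
    omega

/-- sharpness of the balancing bound. With `d = (k−1)·ℓ`, `0 < ε < 1/d`, and
`M_i` the diagonal matrix having `1` in the `i`-th block of `k−1` consecutive diagonal positions
and `ε` elsewhere, for every nonzero matrix `A` some `i` satisfies
`λ₁(AᵀM_iA) > (1/k)·Tr(AᵀM_iA)`. (Indices are `0`-based: the `1`-entries of `M_i` sit in
positions `(k−1)·i ≤ j < (k−1)·(i+1)`.) -/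
theorem stmt1 (k ℓ : ℕ) (hk : 2 ≤ k) (hℓ : 1 ≤ ℓ) (d : ℕ) (hd : d = (k - 1) * ℓ)
    (ε : ℝ) (hε0 : 0 < ε) (hε1 : ε < 1 / (d : ℝ))
    (M : Fin ℓ → Matrix (Fin d) (Fin d) ℝ)
    (hM : ∀ i : Fin ℓ, M i = Matrix.diagonal (fun j : Fin d =>
      if (k - 1) * i.val ≤ j.val ∧ j.val < (k - 1) * (i.val + 1) then (1 : ℝ) else ε)) :
    ∀ A : Matrix (Fin d) (Fin d) ℝ, A ≠ 0 → ∃ i : Fin ℓ,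
      (1 / (k : ℝ)) * Matrix.trace (Aᵀ * M i * A)
        < sortedEigs (Aᵀ * M i * A)
            ⟨0, by subst hd; exact Nat.mul_pos (by omega) hℓ⟩ := by
  intro A hA0
  set κ := k - 1 with hκdef
  have hκ : 0 < κ := by omega
  have hd0 : 0 < d := by subst hd; exact Nat.mul_pos hκ hℓ
  -- basic data
  set r : Fin d → ℝ := fun j => ∑ x, (A j x)^2 with hr
  have hr0 : ∀ j, 0 ≤ r j := fun j => Finset.sum_nonneg fun x _ => sq_nonneg _
  set T : ℝ := ∑ j, r j with hT
  have hT0 : 0 < T := by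
    have : ∃ j x, A j x ≠ 0 := by
      by_contra hc
      push_neg at hc
      exact hA0 (Matrix.ext fun j x => hc j x)
    obtain ⟨j, x, hjx⟩ := this
    have hrj : 0 < r j := Finset.sum_pos' (fun x _ => sq_nonneg _)
      ⟨x, Finset.mem_univ x, by positivity⟩
    exact Finset.sum_pos' (fun j _ => hr0 j) ⟨j, Finset.mem_univ j, hrj⟩
  set cond : Fin ℓ → Fin d → Prop := fun i j => κ * i.val ≤ j.val ∧ j.val < κ * (i.val + 1)
    with hcond
  set t : Fin ℓ → ℝ := fun i => ∑ j, (if cond i j then r j else 0) with ht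
  -- sum of t equals T
  have hsum_t : ∑ i, t i = T := by
    rw [ht, hT, Finset.sum_comm]
    apply Finset.sum_congr rfl
    intro j _
    have h1 : κ * (j.val / κ) + j.val % κ = j.val := Nat.div_add_mod j.val κ
    have h2 : j.val % κ < κ := Nat.mod_lt _ hκ
    have h3 : j.val / κ < ℓ := by
      apply Nat.div_lt_of_lt_mul
      have := j.isLt
      omega
    rw [Finset.sum_eq_single_of_mem (⟨j.val / κ, h3⟩ : Fin ℓ) (Finset.mem_univ _)]
    · rw [if_pos]
      constructor
      · simp only; omega
      · simp only
        have : κ * (j.val / κ + 1) = κ * (j.val / κ) + κ := by ring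
        omega
    · intro i _ hne
      rw [if_neg]
      intro hco
      apply hne
      obtain ⟨hc1, hc2⟩ := hco
      have h4 : j.val / κ = i.val := Nat.div_eq_of_lt_le
        (by rw [Nat.mul_comm]; exact hc1) (by rw [Nat.mul_comm]; exact hc2)
      apply Fin.ext
      simp only
      omega
  have ht_le : ∀ i, t i ≤ T := by
    intro i
    rw [ht, hT]
    apply Finset.sum_le_sum
    intro j _
    split_ifs
    · exact le_refl _
    · exact hr0 j
  -- choose the block with maximal weight
  obtain ⟨i₀, -, hmax⟩ := Finset.exists_max_image Finset.univ t ⟨⟨0, hℓ⟩, Finset.mem_univ _⟩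
  have hℓt : T ≤ (ℓ : ℝ) * t i₀ := by
    calc T = ∑ i, t i := hsum_t.symm
    _ ≤ ∑ _i : Fin ℓ, t i₀ := Finset.sum_le_sum fun i _ => hmax i (Finset.mem_univ i)
    _ = (ℓ : ℝ) * t i₀ := by simp [Finset.sum_const, mul_comm]
  have ht0 : 0 < t i₀ := by
    have hl0 : (0:ℝ) < (ℓ:ℝ) := by exact_mod_cast hℓ
    nlinarith
  -- embedding of the block
  have hbound : ∀ a : Fin κ, κ * i₀.val + a.val < d := by
    intro a
    have h1 : i₀.val + 1 ≤ ℓ := i₀.isLt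
    have h2 : κ * (i₀.val + 1) ≤ κ * ℓ := Nat.mul_le_mul_left κ h1
    have h3 : κ * (i₀.val + 1) = κ * i₀.val + κ := by ring
    have := a.isLt
    omega
  set emb : Fin κ → Fin d := fun a => ⟨κ * i₀.val + a.val, hbound a⟩ with hembdef
  have hemb : ∀ a : Fin κ, (emb a).val = κ * i₀.val + a.val := fun a => rfl
  refine ⟨i₀, ?_⟩
  rw [hM i₀]
  set m : Fin d → ℝ := fun j => if κ * i₀.val ≤ j.val ∧ j.val < κ * (i₀.val + 1) then 1 else ε
    with hm
  set N : Matrix (Fin d) (Fin d) ℝ := Aᵀ * Matrix.diagonal m * A with hN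
  have hNh : N.IsHermitian := by
    rw [hN, ← Matrix.conjTranspose_eq_transpose_of_trivial]
    exact Matrix.isHermitian_conjTranspose_mul_mul A (Matrix.isHermitian_diagonal m)
  -- trace of N
  have htraceN : N.trace = t i₀ + ε * (T - t i₀) := by
    have e1 : N.trace = ∑ j, m j * r j := by
      rw [hN]
      simp only [Matrix.trace, Matrix.diag, Matrix.mul_apply, Matrix.transpose_apply,
        Matrix.diagonal_apply, mul_ite, mul_zero, ite_mul, zero_mul,
        Finset.sum_ite_eq, Finset.sum_ite_eq', Finset.mem_univ, if_true]
      rw [Finset.sum_comm]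
      apply Finset.sum_congr rfl
      intro j _
      rw [hr]
      simp only
      rw [Finset.mul_sum]
      exact Finset.sum_congr rfl fun x _ => by ring
    rw [e1, ht]
    simp only
    have e2 : ∀ j : Fin d, m j * r j
        = (if cond i₀ j then r j else 0) + ε * (r j - (if cond i₀ j then r j else 0)) := by
      intro j
      simp only [hm, hcond]
      split_ifs <;> ring
    rw [Finset.sum_congr rfl fun j _ => e2 j, Finset.sum_add_distrib, ← Finset.mul_sum]
    congr 1
    rw [Finset.sum_sub_distrib, ← hT]
  -- the block Gram matrix S
  set S : Matrix (Fin κ) (Fin κ) ℝ :=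
    Matrix.of (fun a b => ∑ x, A (emb a) x * A (emb b) x) with hS
  have hSh : S.IsHermitian := by
    show Sᴴ = S
    apply Matrix.ext
    intro a b
    simp only [Matrix.conjTranspose_apply, hS, Matrix.of_apply, star_trivial]
    exact Finset.sum_congr rfl fun x _ => mul_comm _ _
  have htrS : S.trace = t i₀ := by
    rw [ht]
    simp only [hcond]
    rw [block_sum hκ i₀ emb hemb r]
    simp only [Matrix.trace, Matrix.diag, hS, Matrix.of_apply, hr]
    exact Finset.sum_congr rfl fun a _ => Finset.sum_congr rfl fun x _ => (sq (A (emb a) x)).symm ▸ by ring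
  -- top eigenvalue of S
  obtain ⟨jmax, -, hjmax⟩ := Finset.exists_max_image Finset.univ hSh.eigenvalues
    ⟨⟨0, hκ⟩, Finset.mem_univ _⟩
  set μ : ℝ := hSh.eigenvalues jmax with hμ
  have hκμ : t i₀ ≤ (κ : ℝ) * μ := by
    rw [← htrS, ← sum_eigs_eq_trace hSh]
    calc ∑ i, hSh.eigenvalues i ≤ ∑ _i : Fin κ, μ :=
          Finset.sum_le_sum fun i _ => hjmax i (Finset.mem_univ i)
      _ = (κ : ℝ) * μ := by simp [Finset.sum_const, mul_comm]
  have hκpos : (0:ℝ) < (κ:ℝ) := by exact_mod_cast hκ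
  have hμ0 : 0 < μ := by nlinarith
  -- top eigenvector
  set u : Fin κ → ℝ := ⇑(hSh.eigenvectorBasis jmax) with hu
  have hSu : S *ᵥ u = μ • u := hSh.mulVec_eigenvectorBasis jmax
  have huu : u ⬝ᵥ u = 1 := by
    have h1 : ‖hSh.eigenvectorBasis jmax‖ = 1 := hSh.eigenvectorBasis.orthonormal.1 jmax
    have h2 : (inner ℝ (hSh.eigenvectorBasis jmax) (hSh.eigenvectorBasis jmax) : ℝ) = 1 := by
      rw [real_inner_self_eq_norm_sq, h1]; norm_num
    rw [PiLp.inner_apply] at h2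
    simpa [dotProduct, hu, ← sq] using h2
  clear_value μ u
  -- the test vector v
  set v : Fin d → ℝ := fun x => ∑ a, A (emb a) x * u a with hv
  have key : ∀ a : Fin κ, ∑ x, A (emb a) x * v x = μ * u a := by
    intro a
    have e3 : ∑ x, A (emb a) x * v x = ∑ b, S a b * u b := by
      calc ∑ x, A (emb a) x * v x
          = ∑ x, ∑ b, A (emb a) x * (A (emb b) x * u b) := by
            apply Finset.sum_congr rfl
            intro x _
            rw [hv]
            simp only
            rw [Finset.mul_sum]
        _ = ∑ b, ∑ x, A (emb a) x * (A (emb b) x * u b) := Finset.sum_comm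
        _ = ∑ b, S a b * u b := by
            apply Finset.sum_congr rfl
            intro b _
            simp only [hS, Matrix.of_apply]
            rw [Finset.sum_mul]
            exact Finset.sum_congr rfl fun x _ => by ring
    rw [e3]
    have e4 := congrFun hSu a
    simpa [Matrix.mulVec, dotProduct] using e4
  have hvv : v ⬝ᵥ v = μ := by
    calc v ⬝ᵥ v = ∑ x, (∑ a, A (emb a) x * u a) * v x := rfl
      _ = ∑ x, ∑ a, (A (emb a) x * u a) * v x := by
          exact Finset.sum_congr rfl fun x _ => Finset.sum_mul _ _ _
      _ = ∑ a, ∑ x, (A (emb a) x * u a) * v x := Finset.sum_comm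
      _ = ∑ a, u a * ∑ x, A (emb a) x * v x := by
          apply Finset.sum_congr rfl
          intro a _
          rw [Finset.mul_sum]
          exact Finset.sum_congr rfl fun x _ => by ring
      _ = ∑ a, u a * (μ * u a) := Finset.sum_congr rfl fun a _ => by rw [key a]
      _ = μ * (u ⬝ᵥ u) := by
          rw [dotProduct, Finset.mul_sum]
          exact Finset.sum_congr rfl fun a _ => by ring
      _ = μ := by rw [huu, mul_one]
  -- facts about sortedEigs
  obtain ⟨-, hall⟩ := sortedEigs_zero_max hd0 hNh
  suffices hgoal : (1 / (k : ℝ)) * N.trace < sortedEigs N ⟨0, hd0⟩ by exact hgoal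
  set lam : ℝ := sortedEigs N ⟨0, hd0⟩ with hlam
  clear_value lam
  have hRay : v ⬝ᵥ (N *ᵥ v) ≤ lam * μ := by
    rw [← hvv]
    exact rayleigh_le hNh hall v
  -- lower bound for the Rayleigh quotient
  have hlow : μ^2 ≤ v ⬝ᵥ (N *ᵥ v) := by
    have hNv : v ⬝ᵥ (N *ᵥ v) = (A *ᵥ v) ⬝ᵥ (Matrix.diagonal m *ᵥ (A *ᵥ v)) := by
      rw [hN, ← Matrix.mulVec_mulVec, ← Matrix.mulVec_mulVec,
        dotProduct_mulVec v Aᵀ _, Matrix.vecMul_transpose]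
    set z : Fin d → ℝ := A *ᵥ v with hz
    have hze : ∀ a : Fin κ, z (emb a) = μ * u a := fun a => key a
    have h1 : z ⬝ᵥ (Matrix.diagonal m *ᵥ z) = ∑ j, m j * (z j)^2 := by
      simp only [dotProduct, Matrix.mulVec_diagonal]
      exact Finset.sum_congr rfl fun j _ => by ring
    have h2 : ∑ j, (if cond i₀ j then (z j)^2 else 0) ≤ ∑ j, m j * (z j)^2 := by
      apply Finset.sum_le_sum
      intro j _
      simp only [hm, hcond]
      split_ifs with h
      · exact le_of_eq (one_mul _).symm
      · positivity
    have h3 : ∑ j, (if cond i₀ j then (z j)^2 else 0) = ∑ a, (z (emb a))^2 := by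
      simp only [hcond]
      exact block_sum hκ i₀ emb hemb (fun j => (z j)^2)
    have h4 : ∑ a, (z (emb a))^2 = μ^2 := by
      rw [Finset.sum_congr rfl fun a _ => by rw [hze a]]
      have : ∑ a, (μ * u a)^2 = μ^2 * (u ⬝ᵥ u) := by
        rw [dotProduct, Finset.mul_sum]
        exact Finset.sum_congr rfl fun a _ => by ring
      rw [this, huu, mul_one]
    rw [hNv, h1]
    rw [h3, h4] at h2
    exact h2
  have hμlam : μ ≤ lam := by nlinarith
  -- final arithmetic
  have hεd : ε * ((κ:ℝ) * (ℓ:ℝ)) < 1 := by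
    have hd0' : (0:ℝ) < (d:ℝ) := by exact_mod_cast hd0
    rw [lt_div_iff₀ hd0'] at hε1
    have : ((κ:ℝ) * (ℓ:ℝ)) = (d:ℝ) := by rw [hd]; push_cast; ring
    rw [this]
    exact hε1
  have hkcast : (k:ℝ) = (κ:ℝ) + 1 := by
    have : k = κ + 1 := by omega
    rw [this]; push_cast; ring
  rw [htraceN, hkcast]
  have p1 : ε * (κ:ℝ) * T ≤ ε * κ * ((ℓ:ℝ) * t i₀) :=
    mul_le_mul_of_nonneg_left hℓt (by positivity)
  have p2 : ε * ((κ:ℝ) * ℓ) * t i₀ < 1 * t i₀ := mul_lt_mul_of_pos_right hεd ht0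
  have p3 : ε * (κ:ℝ) * T < t i₀ := by nlinarith
  have p4 : (κ:ℝ) * μ ≤ (κ:ℝ) * lam := mul_le_mul_of_nonneg_left hμlam (by positivity)
  have p5 : t i₀ ≤ (κ:ℝ) * lam := le_trans hκμ p4
  have p6 : ε * (T - t i₀) < lam := by
    have h7 : (κ:ℝ) * (ε * (T - t i₀)) < (κ:ℝ) * lam := by
      linarith [p3, p5, mul_nonneg (mul_nonneg hε0.le hκpos.le) ht0.le]
    exact lt_of_mul_lt_mul_left h7 hκpos.le
  have hkpos : (0:ℝ) < (κ:ℝ) + 1 := by positivity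
  rw [one_div, inv_mul_lt_iff₀ hkpos]
  linarith [p5, p6]
end

section
/- Let R > 1, let A ∈ 𝒟_R be a symmetric positive-definite d × d matrix with eigenvalues λ₁(A) ≥ … ≥ λ_d(A) and corresponding eigenspaces E_j, and let 𝒥 = { j ∈ {1,…,d−1} : λ_j(A) = R·λ_{j+1}(A) }. Suppose η ∈ ℝᵈ satisfies |P_{E_j}η|² < (1/2)|P_{E_{j+1}}η|² for every j ∈ 𝒥. Then there exists ε₀ > 0 such that A_η(ε)/s₁(A_η(ε)) ∈ 𝒟_R for every ε ∈ (0, ε₀), where A_η(ε) = A(Id + ε η⊗η). -/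
open Matrix

/-- The singular values of a real square matrix, in decreasing order. -/
noncomputable def sval {d : ℕ} (A : Matrix (Fin d) (Fin d) ℝ) : Fin d → ℝ :=
  fun i => Real.sqrt (sortedEigs (Aᵀ * A) i)

/-- The set `𝒟_R` of invertible matrices with `s₁(A) = 1` and `s_j(A) ≤ R·s_{j+1}(A)`. -/
def DR (d : ℕ) (hd : 1 ≤ d) (R : ℝ) : Set (Matrix (Fin d) (Fin d) ℝ) :=
  {A | IsUnit A ∧ sval A ⟨0, hd⟩ = 1 ∧
    ∀ (j : Fin d) (h : j.val + 1 < d), sval A j ≤ R * sval A ⟨j.val + 1, h⟩}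

section Infra

variable {d k m : ℕ}

/-- A dot-product-orthonormal family. -/
def OrthoFam {d k : ℕ} (v : Fin k → Fin d → ℝ) : Prop :=
  ∀ i j, v i ⬝ᵥ v j = if i = j then (1:ℝ) else 0

lemma OrthoFam.dot {v : Fin k → Fin d → ℝ} (hv : OrthoFam v) (i j : Fin k) :
    v i ⬝ᵥ v j = if i = j then (1:ℝ) else 0 := hv i j

lemma dot_pos {x : Fin d → ℝ} (h : x ≠ 0) : 0 < x ⬝ᵥ x := by
  rcases lt_or_eq_of_le (Finset.sum_nonneg (fun i _ => mul_self_nonneg (x i)) : 0 ≤ x ⬝ᵥ x) with h' | h'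
  · exact h'
  · exact absurd (dotProduct_self_eq_zero.mp h'.symm) h

lemma dot_sum_left (f : Fin k → Fin d → ℝ) (w : Fin d → ℝ) :
    (∑ i, f i) ⬝ᵥ w = ∑ i, f i ⬝ᵥ w := by
  simp only [dotProduct, Finset.sum_mul, Finset.sum_apply]
  exact Finset.sum_comm

lemma dot_sum_right (f : Fin k → Fin d → ℝ) (w : Fin d → ℝ) :
    w ⬝ᵥ (∑ i, f i) = ∑ i, w ⬝ᵥ f i := by
  rw [dotProduct_comm, dot_sum_left]
  simp [dotProduct_comm]

lemma OrthoFam.comp {v : Fin k → Fin d → ℝ} (hv : OrthoFam v) {g : Fin m → Fin k}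
    (hg : Function.Injective g) : OrthoFam (v ∘ g) := by
  intro i j
  simp only [Function.comp_apply, hv (g i) (g j)]
  by_cases h : i = j
  · simp [h]
  · rw [if_neg (fun hc => h (hg hc)), if_neg h]

lemma OrthoFam.dot_sum_sum {v : Fin k → Fin d → ℝ} (hv : OrthoFam v) (c b : Fin k → ℝ) :
    (∑ i, c i • v i) ⬝ᵥ (∑ i, b i • v i) = ∑ i, c i * b i := by
  rw [dot_sum_left]
  refine Finset.sum_congr rfl fun i _ => ?_
  rw [smul_dotProduct, dot_sum_right]
  simp only [dotProduct_smul, hv.dot, smul_eq_mul, mul_ite, mul_one, mul_zero]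
  simp [Finset.sum_ite_eq]

lemma OrthoFam.norm_sq {v : Fin k → Fin d → ℝ} (hv : OrthoFam v) (c : Fin k → ℝ) :
    (∑ i, c i • v i) ⬝ᵥ (∑ i, c i • v i) = ∑ i, (c i)^2 := by
  rw [hv.dot_sum_sum]; simp [pow_two]

lemma mulVec_sum_smul (M : Matrix (Fin d) (Fin d) ℝ) (v : Fin k → Fin d → ℝ) (c : Fin k → ℝ) :
    M *ᵥ (∑ i, c i • v i) = ∑ i, c i • (M *ᵥ v i) := by
  simp only [← Matrix.mulVecLin_apply, map_sum, LinearMap.map_smul]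

lemma OrthoFam.quad_form {M : Matrix (Fin d) (Fin d) ℝ} {v : Fin k → Fin d → ℝ}
    (hv : OrthoFam v) {e : Fin k → ℝ} (hev : ∀ i, M *ᵥ v i = e i • v i) (c : Fin k → ℝ) :
    (∑ i, c i • v i) ⬝ᵥ (M *ᵥ ∑ i, c i • v i) = ∑ i, e i * (c i)^2 := by
  rw [mulVec_sum_smul]
  have : ∀ i, c i • (M *ᵥ v i) = (c i * e i) • v i := by
    intro i; rw [hev i, smul_smul]
  rw [Finset.sum_congr rfl fun i _ => this i, hv.dot_sum_sum]
  refine Finset.sum_congr rfl fun i _ => by ring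

lemma OrthoFam.linearIndependent {v : Fin k → Fin d → ℝ} (hv : OrthoFam v) :
    LinearIndependent ℝ v := by
  rw [Fintype.linearIndependent_iff]
  intro c hc i
  have h0 : (∑ j, c j • v j) ⬝ᵥ (∑ j, (if j = i then (1:ℝ) else 0) • v j) = c i := by
    rw [hv.dot_sum_sum]
    simp [Finset.sum_ite_eq']
  rw [hc] at h0
  simpa using h0.symm

lemma exists_common {u : Fin m → Fin d → ℝ} {w : Fin k → Fin d → ℝ}
    (hu : OrthoFam u) (hw : OrthoFam w) (hdim : d < m + k) :
    ∃ (a : Fin m → ℝ) (c : Fin k → ℝ),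
      (∑ i, a i • u i = ∑ i, c i • w i) ∧ ∑ i, a i • u i ≠ 0 := by
  set S := Submodule.span ℝ (Set.range u)
  set T := Submodule.span ℝ (Set.range w)
  have hS : Module.finrank ℝ S = m := by
    rw [finrank_span_eq_card hu.linearIndependent]; simp
  have hT : Module.finrank ℝ T = k := by
    rw [finrank_span_eq_card hw.linearIndependent]; simp
  have heq := Submodule.finrank_sup_add_finrank_inf_eq S T
  have hle := Submodule.finrank_le (S ⊔ T)
  have hd : Module.finrank ℝ (Fin d → ℝ) = d := by simp
  rw [hd] at hle
  have h2 : 0 < Module.finrank ℝ ↥(S ⊓ T) := by omega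
  have : Nontrivial ↥(S ⊓ T) := Module.finrank_pos_iff.mp h2
  obtain ⟨⟨x, hx⟩, hne⟩ := exists_ne (0 : ↥(S ⊓ T))
  have hxne : x ≠ 0 := fun h0 => hne (by simp [Subtype.ext_iff, h0])
  obtain ⟨a, ha⟩ := (Submodule.mem_span_range_iff_exists_fun ℝ).mp hx.1
  obtain ⟨c, hc⟩ := (Submodule.mem_span_range_iff_exists_fun ℝ).mp hx.2
  exact ⟨a, c, by rw [ha, hc], by rw [ha]; exact hxne⟩

end Infra

section Spectral

variable {d : ℕ}

/-- Canonical sorted orthonormal eigenbasis. -/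
noncomputable def canB {M : Matrix (Fin d) (Fin d) ℝ} (h : M.IsHermitian) :
    Fin d → Fin d → ℝ :=
  fun i => (h.eigenvectorBasis (Tuple.sort h.eigenvalues i.rev) : Fin d → ℝ)

lemma sortedEigs_def {M : Matrix (Fin d) (Fin d) ℝ} (h : M.IsHermitian) (i : Fin d) :
    sortedEigs M i = h.eigenvalues (Tuple.sort h.eigenvalues i.rev) := by
  rw [sortedEigs, dif_pos h]; rfl

lemma sortedEigs_antitone {M : Matrix (Fin d) (Fin d) ℝ} (h : M.IsHermitian) :
    Antitone (sortedEigs M) := by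
  intro i j hij
  rw [sortedEigs_def h, sortedEigs_def h]
  exact Tuple.monotone_sort h.eigenvalues (by simpa [Fin.rev_le_rev] using hij)

lemma canB_ortho {M : Matrix (Fin d) (Fin d) ℝ} (h : M.IsHermitian) : OrthoFam (canB h) := by
  intro i j
  by_cases hij : i = j
  · subst hij
    rw [if_pos rfl]
    have hn := h.eigenvectorBasis.orthonormal.1 (Tuple.sort h.eigenvalues i.rev)
    have h2 : (inner ℝ (h.eigenvectorBasis (Tuple.sort h.eigenvalues i.rev))
        (h.eigenvectorBasis (Tuple.sort h.eigenvalues i.rev)) : ℝ) = 1 := by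
      rw [real_inner_self_eq_norm_sq, hn]; norm_num
    rw [PiLp.inner_apply] at h2
    simpa [canB, dotProduct, mul_comm, ← pow_two] using h2
  · rw [if_neg hij]
    have hne : Tuple.sort h.eigenvalues i.rev ≠ Tuple.sort h.eigenvalues j.rev := by
      intro hc
      exact hij (Fin.rev_injective ((Tuple.sort h.eigenvalues).injective hc))
    have h2 := h.eigenvectorBasis.orthonormal.2 hne
    simp only [PiLp.inner_apply, RCLike.inner_apply, starRingEnd_apply, star_trivial] at h2
    simpa [canB, dotProduct, mul_comm] using h2

lemma canB_eigen {M : Matrix (Fin d) (Fin d) ℝ} (h : M.IsHermitian) (i : Fin d) :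
    M *ᵥ canB h i = sortedEigs M i • canB h i := by
  rw [sortedEigs_def h]
  exact h.mulVec_eigenvectorBasis (Tuple.sort h.eigenvalues i.rev)

/-- Courant–Fischer style upper bound. -/
lemma eig_le {M : Matrix (Fin d) (Fin d) ℝ} (hM : M.IsHermitian) (j : Fin d) {k : ℕ}
    {w : Fin k → Fin d → ℝ} (hw : OrthoFam w) (hk : d ≤ k + j.val) {b : ℝ}
    (hb : ∀ c : Fin k → ℝ,
      (∑ i, c i • w i) ⬝ᵥ (M *ᵥ ∑ i, c i • w i) ≤ b * ((∑ i, c i • w i) ⬝ᵥ (∑ i, c i • w i))) :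
    sortedEigs M j ≤ b := by
  set u : Fin (j.val + 1) → Fin d → ℝ := fun i => canB hM ⟨i.val, lt_of_lt_of_le i.2 j.2⟩ with hu
  have hueig : ∀ i, M *ᵥ u i = sortedEigs M ⟨i.val, lt_of_lt_of_le i.2 j.2⟩ • u i :=
    fun i => canB_eigen hM _
  have huo : OrthoFam u := by
    have : u = canB hM ∘ (fun i : Fin (j.val+1) => (⟨i.val, lt_of_lt_of_le i.2 j.2⟩ : Fin d)) := rfl
    rw [this]
    exact (canB_ortho hM).comp (fun a b hab => by
      simpa [Fin.ext_iff] using hab)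
  obtain ⟨a, c, hac, hne⟩ := exists_common huo hw (by omega)
  have hxx : 0 < (∑ i, a i • u i) ⬝ᵥ (∑ i, a i • u i) := dot_pos hne
  have hlow : sortedEigs M j * ((∑ i, a i • u i) ⬝ᵥ (∑ i, a i • u i)) ≤
      (∑ i, a i • u i) ⬝ᵥ (M *ᵥ ∑ i, a i • u i) := by
    rw [huo.quad_form hueig, huo.norm_sq, Finset.mul_sum]
    refine Finset.sum_le_sum fun i _ => ?_
    have : sortedEigs M j ≤ sortedEigs M ⟨i.val, lt_of_lt_of_le i.2 j.2⟩ :=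
      sortedEigs_antitone hM (by simp [Fin.le_def]; omega)
    nlinarith [sq_nonneg (a i)]
  have hhigh := hb c
  rw [← hac] at hhigh
  nlinarith
/-- Courant–Fischer style lower bound. -/
lemma eig_ge {M : Matrix (Fin d) (Fin d) ℝ} (hM : M.IsHermitian) (j : Fin d) {k : ℕ}
    {w : Fin k → Fin d → ℝ} (hw : OrthoFam w) (hk : j.val < k) {b : ℝ}
    (hb : ∀ c : Fin k → ℝ,
      b * ((∑ i, c i • w i) ⬝ᵥ (∑ i, c i • w i)) ≤
        (∑ i, c i • w i) ⬝ᵥ (M *ᵥ ∑ i, c i • w i)) :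
    b ≤ sortedEigs M j := by
  set u : Fin (d - j.val) → Fin d → ℝ :=
    fun i => canB hM ⟨j.val + i.val, by omega⟩ with hu
  have hueig : ∀ i, M *ᵥ u i = sortedEigs M ⟨j.val + i.val, by omega⟩ • u i :=
    fun i => canB_eigen hM _
  have huo : OrthoFam u := by
    have : u = canB hM ∘ (fun i : Fin (d - j.val) => (⟨j.val + i.val, by omega⟩ : Fin d)) := rfl
    rw [this]
    exact (canB_ortho hM).comp (fun a b hab => by
      simpa [Fin.ext_iff] using hab)
  obtain ⟨a, c, hac, hne⟩ := exists_common huo hw (by omega)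
  have hxx : 0 < (∑ i, a i • u i) ⬝ᵥ (∑ i, a i • u i) := dot_pos hne
  have hlow : (∑ i, a i • u i) ⬝ᵥ (M *ᵥ ∑ i, a i • u i) ≤
      sortedEigs M j * ((∑ i, a i • u i) ⬝ᵥ (∑ i, a i • u i)) := by
    rw [huo.quad_form hueig, huo.norm_sq, Finset.mul_sum]
    refine Finset.sum_le_sum fun i _ => ?_
    have : sortedEigs M ⟨j.val + i.val, by omega⟩ ≤ sortedEigs M j :=
      sortedEigs_antitone hM (by simp [Fin.le_def])
    nlinarith [sq_nonneg (a i)]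
  have hhigh := hb c
  rw [← hac] at hhigh
  nlinarith

/-- Uniqueness of the sorted eigenvalues. -/
lemma sortedEigs_eq_of {M : Matrix (Fin d) (Fin d) ℝ} (hM : M.IsHermitian)
    {e : Fin d → ℝ} {v : Fin d → Fin d → ℝ} (hv : OrthoFam v)
    (hev : ∀ i, M *ᵥ v i = e i • v i) (hmono : Antitone e) :
    sortedEigs M = e := by
  funext j
  have hsub : ∀ (g : Fin (d - j.val) → Fin d) (hg : Function.Injective g), True := fun _ _ => trivial
  apply le_antisymm
  · set w : Fin (d - j.val) → Fin d → ℝ := fun i => v ⟨j.val + i.val, by omega⟩ with hwdef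
    have hwo : OrthoFam w := hv.comp (g := fun i : Fin (d - j.val) => (⟨j.val + i.val, by omega⟩ : Fin d))
      (fun a b hab => by simpa [Fin.ext_iff] using hab)
    have hweig : ∀ i, M *ᵥ w i = e ⟨j.val + i.val, by omega⟩ • w i := fun i => hev _
    refine eig_le hM j hwo (by omega) (fun c => ?_)
    rw [hwo.quad_form hweig, hwo.norm_sq, Finset.mul_sum]
    refine Finset.sum_le_sum fun i _ => ?_
    have : e ⟨j.val + i.val, by omega⟩ ≤ e j := hmono (by simp [Fin.le_def])
    nlinarith [sq_nonneg (c i)]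
  · set w : Fin (j.val + 1) → Fin d → ℝ := fun i => v ⟨i.val, lt_of_lt_of_le i.2 j.2⟩ with hwdef
    have hwo : OrthoFam w := hv.comp (g := fun i : Fin (j.val+1) => (⟨i.val, lt_of_lt_of_le i.2 j.2⟩ : Fin d))
      (fun a b hab => by simpa [Fin.ext_iff] using hab)
    have hweig : ∀ i, M *ᵥ w i = e ⟨i.val, lt_of_lt_of_le i.2 j.2⟩ • w i := fun i => hev _
    refine eig_ge hM j hwo (by omega) (fun c => ?_)
    rw [hwo.quad_form hweig, hwo.norm_sq, Finset.mul_sum]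
    refine Finset.sum_le_sum fun i _ => ?_
    have : e j ≤ e ⟨i.val, lt_of_lt_of_le i.2 j.2⟩ := hmono (by simp [Fin.le_def]; omega)
    nlinarith [sq_nonneg (c i)]

end Spectral

section Cor

variable {d : ℕ}

lemma dot_sum_left' {k : ℕ} (s : Finset (Fin k)) (f : Fin k → Fin d → ℝ) (w : Fin d → ℝ) :
    (∑ i ∈ s, f i) ⬝ᵥ w = ∑ i ∈ s, f i ⬝ᵥ w := by
  simp only [dotProduct, Finset.sum_mul, Finset.sum_apply]
  exact Finset.sum_comm

lemma dot_sum_right' {k : ℕ} (s : Finset (Fin k)) (f : Fin k → Fin d → ℝ) (w : Fin d → ℝ) :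
    w ⬝ᵥ (∑ i ∈ s, f i) = ∑ i ∈ s, w ⬝ᵥ f i := by
  rw [dotProduct_comm, dot_sum_left']
  simp [dotProduct_comm]

lemma OrthoFam.dot_sum_sum' {k : ℕ} {v : Fin k → Fin d → ℝ} (hv : OrthoFam v)
    (s s' : Finset (Fin k)) (c b : Fin k → ℝ) :
    (∑ i ∈ s, c i • v i) ⬝ᵥ (∑ i ∈ s', b i • v i) = ∑ i ∈ s ∩ s', c i * b i := by
  rw [dot_sum_left']
  have : ∀ i ∈ s, (c i • v i) ⬝ᵥ (∑ j ∈ s', b j • v j) = if i ∈ s' then c i * b i else 0 := by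
    intro i _
    rw [smul_dotProduct, dot_sum_right']
    simp only [dotProduct_smul, hv.dot, smul_eq_mul, mul_ite, mul_one, mul_zero]
    rw [Finset.sum_ite_eq s' i b]
    by_cases h : i ∈ s' <;> simp [h]
  rw [Finset.sum_congr rfl this, Finset.sum_ite_mem s s' fun i => c i * b i]

lemma mulVec_dot (P : Matrix (Fin d) (Fin d) ℝ) (x y : Fin d → ℝ) :
    (P *ᵥ x) ⬝ᵥ y = x ⬝ᵥ (Pᵀ *ᵥ y) := by
  simp only [dotProduct, Matrix.mulVec, Matrix.transpose_apply, Finset.sum_mul, Finset.mul_sum]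
  rw [Finset.sum_comm]
  exact Finset.sum_congr rfl fun i _ => Finset.sum_congr rfl fun j _ => by ring

lemma cauchy_dot (u x : Fin d → ℝ) : (u ⬝ᵥ x)^2 ≤ (u ⬝ᵥ u) * (x ⬝ᵥ x) := by
  simpa [dotProduct, pow_two, Finset.mul_sum, mul_mul_mul_comm] using
    Finset.sum_mul_sq_le_sq_mul_sq Finset.univ u x

lemma transpose_eq_of_hermitian {M : Matrix (Fin d) (Fin d) ℝ} (h : M.IsHermitian) :
    Mᵀ = M := by
  conv_rhs => rw [← h.eq]
  ext i j
  simp [conjTranspose_apply]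

lemma isHermitian_of_transpose {M : Matrix (Fin d) (Fin d) ℝ} (h : Mᵀ = M) :
    M.IsHermitian := by
  rw [Matrix.IsHermitian]
  conv_rhs => rw [← h]
  ext i j
  simp [conjTranspose_apply]

lemma sortedEigs_smul {M : Matrix (Fin d) (Fin d) ℝ} (hM : M.IsHermitian) {c : ℝ}
    (hc : 0 ≤ c) : sortedEigs (c • M) = fun i => c * sortedEigs M i := by
  have h2 : (c • M).IsHermitian := isHermitian_of_transpose
    (by rw [Matrix.transpose_smul, transpose_eq_of_hermitian hM])
  refine sortedEigs_eq_of h2 (canB_ortho hM) (fun i => ?_) (fun i j hij => ?_)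
  · rw [Matrix.smul_mulVec, canB_eigen hM, smul_smul]
  · exact mul_le_mul_of_nonneg_left (sortedEigs_antitone hM hij) hc

lemma sortedEigs_pos {M : Matrix (Fin d) (Fin d) ℝ} (hM : M.PosDef) (i : Fin d) :
    0 < sortedEigs M i := by
  rw [sortedEigs_def hM.1]
  exact hM.eigenvalues_pos _

lemma posDef_transpose_mul_self {N : Matrix (Fin d) (Fin d) ℝ} (hN : IsUnit N) :
    (Nᵀ * N).PosDef := by
  rw [Matrix.posDef_iff_dotProduct_mulVec]
  constructor
  · exact isHermitian_of_transpose (by rw [transpose_mul, transpose_transpose])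
  · intro x hx
    have hinj : Function.Injective (N.mulVec) := Matrix.mulVec_injective_iff_isUnit.mpr hN
    have hNx : N *ᵥ x ≠ 0 := fun h0 => hx (hinj (by rw [h0, Matrix.mulVec_zero]))
    have heq : x ⬝ᵥ ((Nᵀ * N) *ᵥ x) = (N *ᵥ x) ⬝ᵥ (N *ᵥ x) := by
      rw [mulVec_dot, ← Matrix.mulVec_mulVec]
    simpa [star_trivial, heq] using dot_pos hNx

/-- Eigenvalues of `N*Nᵀ` and `Nᵀ*N` agree for invertible `N`. -/
lemma sortedEigs_flip {N : Matrix (Fin d) (Fin d) ℝ} (hN : IsUnit N) :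
    sortedEigs (N * Nᵀ) = sortedEigs (Nᵀ * N) := by
  have hB : (Nᵀ * N).PosDef := posDef_transpose_mul_self hN
  set c := sortedEigs (Nᵀ * N) with hc
  set v := canB hB.1 with hv
  have hcpos : ∀ i, 0 < c i := sortedEigs_pos hB
  set w : Fin d → Fin d → ℝ := fun i => (Real.sqrt (c i))⁻¹ • (N *ᵥ v i) with hw
  have hdot : ∀ i j, (N *ᵥ v i) ⬝ᵥ (N *ᵥ v j) = if i = j then c j else 0 := by
    intro i j
    have heq2 : (N *ᵥ v i) ⬝ᵥ (N *ᵥ v j) = v i ⬝ᵥ ((Nᵀ * N) *ᵥ v j) := by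
      rw [mulVec_dot, Matrix.mulVec_mulVec]
    rw [heq2, canB_eigen hB.1, dotProduct_smul, canB_ortho hB.1 i j]
    by_cases h : i = j <;> simp [h, hc]
  have hwo : OrthoFam w := by
    intro i j
    rw [hw]
    simp only [smul_dotProduct, dotProduct_smul, hdot i j]
    by_cases h : i = j
    · subst h
      rw [if_pos rfl, if_pos rfl, smul_eq_mul, smul_eq_mul, ← mul_assoc, ← mul_inv,
        Real.mul_self_sqrt (hcpos i).le]
      exact inv_mul_cancel₀ (hcpos i).ne'
    · simp [h]
  have hNve : ∀ i, (N * Nᵀ) *ᵥ (N *ᵥ v i) = c i • (N *ᵥ v i) := by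
    intro i
    rw [Matrix.mulVec_mulVec, Matrix.mul_assoc, ← Matrix.mulVec_mulVec, canB_eigen hB.1,
      Matrix.mulVec_smul]
  have hwe : ∀ i, (N * Nᵀ) *ᵥ w i = c i • w i := by
    intro i
    show (N * Nᵀ) *ᵥ ((Real.sqrt (c i))⁻¹ • (N *ᵥ v i)) = _
    rw [Matrix.mulVec_smul, hNve i, smul_comm]
  have hNNt : (N * Nᵀ).IsHermitian := isHermitian_of_transpose
    (by rw [transpose_mul, transpose_transpose])
  exact sortedEigs_eq_of hNNt hwo hwe (sortedEigs_antitone hB.1)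

/-- For a positive definite matrix, singular values are eigenvalues. -/
lemma sval_eq_sortedEigs {A : Matrix (Fin d) (Fin d) ℝ} (hA : A.PosDef) :
    sval A = sortedEigs A := by
  funext i
  have hAt : Aᵀ = A := transpose_eq_of_hermitian hA.1
  have hAA : (Aᵀ * A) = A * A := by rw [hAt]
  have hsq : sortedEigs (A * A) = fun i => (sortedEigs A i)^2 := by
    have hherm : (A * A).IsHermitian := isHermitian_of_transpose
      (by rw [transpose_mul, hAt])
    refine sortedEigs_eq_of hherm (canB_ortho hA.1) (fun i => ?_) (fun i j hij => ?_)
    · rw [← Matrix.mulVec_mulVec, canB_eigen hA.1, Matrix.mulVec_smul, canB_eigen hA.1,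
        smul_smul, pow_two]
    · have h1 := sortedEigs_antitone hA.1 hij
      have h2 := sortedEigs_pos hA j
      nlinarith [sortedEigs_pos hA i]
  rw [sval, hAA, hsq]
  exact Real.sqrt_sq (sortedEigs_pos hA i).le

end Cor

section MatAlg

variable {d : ℕ}

lemma vecMulVec_mulVec' (u v y : Fin d → ℝ) : vecMulVec u v *ᵥ y = (v ⬝ᵥ y) • u := by
  ext i
  simp only [Matrix.mulVec, vecMulVec_apply, dotProduct, Pi.smul_apply, smul_eq_mul,
    Finset.mul_sum, Finset.sum_mul]
  exact Finset.sum_congr rfl fun j _ => by ring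

lemma vecMulVec_transpose' (u v : Fin d → ℝ) : (vecMulVec u v)ᵀ = vecMulVec v u := by
  ext i j
  simp [vecMulVec_apply, mul_comm]

lemma E_mul_E (η : Fin d → ℝ) :
    vecMulVec η η * vecMulVec η η = (η ⬝ᵥ η) • vecMulVec η η := by
  ext i j
  simp only [Matrix.mul_apply, vecMulVec_apply, Matrix.smul_apply, smul_eq_mul, dotProduct,
    Finset.sum_mul, Finset.mul_sum]
  exact Finset.sum_congr rfl fun k _ => by ring

lemma S_sq (η : Fin d → ℝ) (ε : ℝ) :
    (1 + ε • vecMulVec η η) * (1 + ε • vecMulVec η η)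
      = 1 + (2*ε + ε^2*(η ⬝ᵥ η)) • vecMulVec η η := by
  rw [mul_add, mul_one, add_mul, one_mul, Matrix.smul_mul, Matrix.mul_smul, smul_smul,
    E_mul_E, smul_smul]
  module

lemma St_symm (η : Fin d → ℝ) (t : ℝ) :
    (1 + t • vecMulVec η η)ᵀ = 1 + t • vecMulVec η η := by
  rw [transpose_add, transpose_one, transpose_smul, vecMulVec_transpose']

lemma Bt_transpose_eq {A : Matrix (Fin d) (Fin d) ℝ} (hAt : Aᵀ = A) (η : Fin d → ℝ) (t : ℝ) :
    (A * (1 + t • vecMulVec η η) * A)ᵀ = A * (1 + t • vecMulVec η η) * A := by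
  rw [transpose_mul, transpose_mul, hAt, St_symm, Matrix.mul_assoc]

lemma B_eq {A : Matrix (Fin d) (Fin d) ℝ} (hAt : Aᵀ = A) (η : Fin d → ℝ) (ε : ℝ) :
    (A * (1 + ε • vecMulVec η η)) * (A * (1 + ε • vecMulVec η η))ᵀ
      = A * (1 + (2*ε + ε^2*(η ⬝ᵥ η)) • vecMulVec η η) * A := by
  rw [transpose_mul, hAt, St_symm, ← S_sq η ε, Matrix.mul_assoc, Matrix.mul_assoc,
    Matrix.mul_assoc]

lemma quadB {A : Matrix (Fin d) (Fin d) ℝ} (hAt : Aᵀ = A) (η : Fin d → ℝ) (t : ℝ)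
    (x : Fin d → ℝ) :
    x ⬝ᵥ ((A * (1 + t • vecMulVec η η) * A) *ᵥ x)
      = (A *ᵥ x) ⬝ᵥ (A *ᵥ x) + t * ((A *ᵥ η) ⬝ᵥ x)^2 := by
  rw [← Matrix.mulVec_mulVec, ← Matrix.mulVec_mulVec]
  rw [dotProduct_comm, mulVec_dot, hAt]
  set y := A *ᵥ x with hy
  rw [add_mulVec, one_mulVec, Matrix.smul_mulVec, vecMulVec_mulVec',
    add_dotProduct, smul_dotProduct, smul_dotProduct, smul_eq_mul, smul_eq_mul]
  have hζx : (A *ᵥ η) ⬝ᵥ x = η ⬝ᵥ y := by rw [mulVec_dot, hAt]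
  rw [hζx]
  ring

lemma S_posDef (η : Fin d → ℝ) {ε : ℝ} (hε : 0 ≤ ε) :
    (1 + ε • vecMulVec η η).PosDef := by
  rw [Matrix.posDef_iff_dotProduct_mulVec]
  constructor
  · exact isHermitian_of_transpose (St_symm η ε)
  · intro x hx
    have : x ⬝ᵥ ((1 + ε • vecMulVec η η) *ᵥ x) = x ⬝ᵥ x + ε * (η ⬝ᵥ x)^2 := by
      rw [add_mulVec, one_mulVec, Matrix.smul_mulVec, vecMulVec_mulVec',
        dotProduct_add, dotProduct_smul, dotProduct_smul, smul_eq_mul, smul_eq_mul,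
        dotProduct_comm η x]
      ring
    simp only [star_trivial]
    rw [this]
    have := dot_pos hx
    nlinarith [sq_nonneg (η ⬝ᵥ x)]

end MatAlg

section Arith

lemma q_bound {β Z δ : ℝ} (hβ : 0 < β) (hZ : 0 ≤ Z) (hδ0 : 0 ≤ δ) (hδβ : δ < β^2) :
    0 < (β - Real.sqrt δ)/(β + Z + 1) ∧ (β - Real.sqrt δ)/(β + Z + 1) < 1 ∧
      Real.sqrt δ ≤ Real.sqrt (1 - ((β - Real.sqrt δ)/(β + Z + 1))^2)*β
        - Z*Real.sqrt (((β - Real.sqrt δ)/(β + Z + 1))^2) := by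
  have hden : 0 < β + Z + 1 := by linarith
  have hsd : Real.sqrt δ < β := by
    have := Real.sqrt_lt_sqrt hδ0 hδβ
    rwa [Real.sqrt_sq hβ.le] at this
  have hsd0 : 0 ≤ Real.sqrt δ := Real.sqrt_nonneg δ
  set r := (β - Real.sqrt δ)/(β + Z + 1) with hr
  have hr0 : 0 < r := div_pos (by linarith) hden
  have hr1 : r < 1 := by
    rw [hr, div_lt_one hden]; linarith
  have hrsq : Real.sqrt (r^2) = r := Real.sqrt_sq hr0.le
  have hmul : r * (β + Z + 1) = β - Real.sqrt δ := div_mul_cancel₀ _ hden.ne'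
  have h1r : (1 : ℝ) - r ≤ Real.sqrt (1 - r^2) := by
    have h2 : ((1:ℝ)-r)^2 ≤ 1 - r^2 := by nlinarith
    calc (1:ℝ) - r = Real.sqrt ((1-r)^2) := (Real.sqrt_sq (by linarith)).symm
    _ ≤ Real.sqrt (1 - r^2) := Real.sqrt_le_sqrt h2
  refine ⟨hr0, hr1, ?_⟩
  rw [hrsq]
  have : (1 - r) * β ≤ Real.sqrt (1 - r^2) * β := mul_le_mul_of_nonneg_right h1r hβ.le
  nlinarith

lemma claim_arith {g δ β Z s c' w t θ : ℝ} (hg : 0 < g) (hδ0 : 0 ≤ δ) (hβ : 0 < β)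
    (hZ : 0 ≤ Z) (hs : 0 ≤ s) (hw : w^2 ≤ Z^2 * s) (ht : 0 < t) (htτ : t ≤ θ*g/(δ+1))
    (hθ0 : 0 ≤ θ) (hθ1 : θ ≤ 1)
    (hq : Real.sqrt δ ≤ Real.sqrt (1-θ)*β - Z*Real.sqrt θ) :
    δ*t*(s + c'^2) ≤ g*s + t*(w + c'*β)^2 := by
  by_cases hcb : δ*t*(s+c'^2) ≤ g*s
  · nlinarith [sq_nonneg (w + c'*β)]
  push_neg at hcb
  have hρ : 0 < s + c'^2 := by
    rcases (by positivity : (0:ℝ) ≤ s + c'^2).lt_or_eq with h|h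
    · exact h
    · exfalso
      have hs0 : s = 0 := by nlinarith [sq_nonneg c']
      rw [← h, hs0] at hcb
      simp at hcb
  have hδt : δ * t ≤ θ * g := by
    have h2 : t * (δ + 1) ≤ θ * g := by
      rw [← le_div_iff₀ (by linarith : (0:ℝ) < δ + 1)]; exact htτ
    nlinarith
  have hsθ : s ≤ θ*(s+c'^2) := by
    have : g * s < θ * g * (s + c'^2) := by nlinarith
    nlinarith
  have hc2 : (1-θ)*(s+c'^2) ≤ c'^2 := by nlinarith
  set P := Real.sqrt (s + c'^2) with hP
  set σ := Real.sqrt s with hσdef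
  have hP0 : 0 ≤ P := Real.sqrt_nonneg _
  have hPsq : P^2 = s + c'^2 := Real.sq_sqrt hρ.le
  have hσ0 : 0 ≤ σ := Real.sqrt_nonneg _
  have hσsq : σ^2 = s := Real.sq_sqrt hs
  have hσP : σ ≤ Real.sqrt θ * P := by
    rw [hσdef, hP, ← Real.sqrt_mul hθ0]
    exact Real.sqrt_le_sqrt hsθ
  have habsw : |w| ≤ Z * σ := by
    rw [← Real.sqrt_sq_eq_abs, hσdef]
    calc Real.sqrt (w^2) ≤ Real.sqrt (Z^2*s) := Real.sqrt_le_sqrt hw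
    _ = Z * Real.sqrt s := by rw [Real.sqrt_mul (sq_nonneg Z), Real.sqrt_sq hZ]
  have habsc : Real.sqrt (1-θ) * P ≤ |c'| := by
    have h1 : |c'| = Real.sqrt (c'^2) := (Real.sqrt_sq_eq_abs c').symm
    rw [h1, hP, ← Real.sqrt_mul (by linarith : (0:ℝ) ≤ 1-θ)]
    exact Real.sqrt_le_sqrt hc2
  have hsum : Real.sqrt δ * P ≤ |w + c'*β| := by
    have h1 : |c'*β| ≤ |w + c'*β| + |w| := by
      calc |c'*β| = |(w + c'*β) + (-w)| := by ring_nf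
      _ ≤ |w + c'*β| + |(-w)| := abs_add_le _ _
      _ = |w + c'*β| + |w| := by rw [abs_neg]
    have h2 : |c'*β| = |c'| * β := by rw [abs_mul, abs_of_pos hβ]
    have h3 : Real.sqrt δ * P ≤ (Real.sqrt (1-θ)*β - Z*Real.sqrt θ) * P :=
      mul_le_mul_of_nonneg_right hq hP0
    have h4 : Z * σ ≤ Z * (Real.sqrt θ * P) := mul_le_mul_of_nonneg_left hσP hZ
    nlinarith [abs_nonneg w]
  have hfin : δ * (s + c'^2) ≤ (w + c'*β)^2 := by
    have h1 : (Real.sqrt δ * P)^2 ≤ |w + c'*β|^2 := by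
      apply pow_le_pow_left₀ (by positivity) hsum
    rw [sq_abs, mul_pow, Real.sq_sqrt hδ0, hPsq] at h1
    exact h1
  have h5 : t*(δ*(s+c'^2)) ≤ t*((w+c'*β)^2) := mul_le_mul_of_nonneg_left hfin ht.le
  have h6 : 0 ≤ g * s := mul_nonneg hg.le hs
  calc δ*t*(s+c'^2) = t*(δ*(s+c'^2)) := by ring
  _ ≤ t*((w+c'*β)^2) := h5
  _ ≤ g*s + t*(w+c'*β)^2 := by linarith
end Arith

section Key

variable {d : ℕ}

set_option maxHeartbeats 1000000 in
lemma key {R : ℝ} (hR : 1 < R) {A : Matrix (Fin d) (Fin d) ℝ} (hA : A.PosDef)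
    (η : Fin d → ℝ) (j : Fin d) (hj : j.val + 1 < d)
    (hle : sortedEigs A j ≤ R * sortedEigs A ⟨j.val+1, hj⟩)
    (hpeq : sortedEigs A j = R * sortedEigs A ⟨j.val+1, hj⟩ →
      ∃ pp : Fin d → ℝ, A *ᵥ pp = sortedEigs A ⟨j.val+1, hj⟩ • pp ∧ 0 < pp ⬝ᵥ pp ∧
        η ⬝ᵥ pp = pp ⬝ᵥ pp ∧ (η ⬝ᵥ canB hA.1 j)^2 < (1/2) * (pp ⬝ᵥ pp)) :
    ∃ τ > (0:ℝ), ∀ t : ℝ, 0 < t → t < τ →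
      sortedEigs (A * (1 + t • vecMulVec η η) * A) j
        ≤ R^2 * sortedEigs (A * (1 + t • vecMulVec η η) * A) ⟨j.val+1, hj⟩ := by
  have hH := hA.1
  have hAt : Aᵀ = A := transpose_eq_of_hermitian hH
  have hvo : OrthoFam (canB hH) := canB_ortho hH
  have hve : ∀ i, A *ᵥ canB hH i = sortedEigs A i • canB hH i := canB_eigen hH
  have hpos : ∀ i, 0 < sortedEigs A i := sortedEigs_pos hA
  have hanti : Antitone (sortedEigs A) := sortedEigs_antitone hH
  set v := canB hH with hv
  set lam := sortedEigs A with hlam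
  set j' : Fin d := ⟨j.val+1, hj⟩ with hj'def
  set ζ := A *ᵥ η with hζ
  set Z2 := ζ ⬝ᵥ ζ with hZ2
  have hZ2nn : 0 ≤ Z2 := Finset.sum_nonneg (fun i _ => mul_self_nonneg (ζ i))
  set μj := lam j ^ 2 with hμj
  set μj' := lam j' ^ 2 with hμj'
  have hμjpos : 0 < μj := pow_pos (hpos j) 2
  have hμj'pos : 0 < μj' := pow_pos (hpos j') 2
  have hlamle : lam j' ≤ lam j := hanti (by simp [Fin.le_def, hj'def])
  have hR0 : (0:ℝ) < R := by linarith
  have hBh : ∀ t : ℝ, (A * (1 + t • vecMulVec η η) * A).IsHermitian :=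
    fun t => isHermitian_of_transpose (Bt_transpose_eq hAt η t)
  -- the upper-bound test family
  set w : Fin (d - j.val) → Fin d → ℝ :=
    (fun i => v ⟨j.val + i.val, by omega⟩) with hwdef
  have hwo : OrthoFam w := hvo.comp
    (g := fun i : Fin (d - j.val) => (⟨j.val + i.val, by omega⟩ : Fin d))
    (fun a b hab => by simpa [Fin.ext_iff] using hab)
  have hAxw : ∀ c : Fin (d - j.val) → ℝ,
      A *ᵥ (∑ i, c i • w i) = ∑ i, (c i * lam ⟨j.val + i.val, by omega⟩) • w i := by
    intro c
    rw [mulVec_sum_smul]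
    refine Finset.sum_congr rfl fun i _ => ?_
    rw [hwdef]
    simp only []
    rw [hve ⟨j.val + i.val, by omega⟩, smul_smul]
  -- the simple lower-bound test family
  set u1 : Fin (j.val+2) → Fin d → ℝ := (fun i => v ⟨i.val, by omega⟩) with hu1def
  have hu1o : OrthoFam u1 := hvo.comp
    (g := fun i : Fin (j.val+2) => (⟨i.val, by omega⟩ : Fin d))
    (fun a b hab => by simpa [Fin.ext_iff] using hab)
  have hAxu1 : ∀ c : Fin (j.val+2) → ℝ,
      A *ᵥ (∑ i, c i • u1 i) = ∑ i, (c i * lam ⟨i.val, by omega⟩) • u1 i := by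
    intro c
    rw [mulVec_sum_smul]
    refine Finset.sum_congr rfl fun i _ => ?_
    rw [hu1def]
    simp only []
    rw [hve ⟨i.val, by omega⟩, smul_smul]
  by_cases hcase : lam j = R * lam j'
  · -- equality case
    obtain ⟨pp, hppe, hπ2, hηpp, hasq⟩ := hpeq hcase
    set π := Real.sqrt (pp ⬝ᵥ pp) with hπdef
    have hπpos : 0 < π := Real.sqrt_pos.mpr hπ2
    have hππ : π * π = pp ⬝ᵥ pp := Real.mul_self_sqrt hπ2.le
    set a := η ⬝ᵥ v j with hadef
    set zj := lam j * a with hzjdef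
    set β := lam j' * π with hβdef
    have hβpos : 0 < β := mul_pos (hpos j') hπpos
    set δ := 2 * zj^2 / R^2 with hδdef
    have hδ0 : 0 ≤ δ := by positivity
    set g := μj - μj' with hgdef
    have hμeq : μj = R^2 * μj' := by rw [hμj, hμj', hcase]; ring
    have hR2 : 1 < R^2 := by nlinarith [hR]
    have hg : 0 < g := by
      have e : g = (R^2-1)*μj' := by rw [hgdef, hμeq]; ring
      rw [e]
      exact mul_pos (by linarith only [hR2]) hμj'pos
    have hβsq : β^2 = μj' * (pp ⬝ᵥ pp) := by
      rw [hβdef, hμj', mul_pow, pow_two π, hππ]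
    have hδβ : δ < β^2 := by
      rw [hδdef, div_lt_iff₀ (by positivity : (0:ℝ) < R^2)]
      have h1 : zj^2 = μj * a^2 := by rw [hzjdef, hμj]; ring
      have h2 : μj * (a^2) < μj * ((1/2)*(pp ⬝ᵥ pp)) := mul_lt_mul_of_pos_left hasq hμjpos
      have hμpp : μj * ((1/2)*(pp ⬝ᵥ pp)) = (1/2)*(μj*(pp ⬝ᵥ pp)) := by ring
      have hββ : β^2*R^2 = μj * (pp ⬝ᵥ pp) := by rw [hβsq, hμeq]; ring
      linarith only [h1, h2, hμpp, hββ]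
    set Z := Real.sqrt Z2 with hZdef
    have hZnn : 0 ≤ Z := Real.sqrt_nonneg _
    have hZZ : Z^2 = Z2 := Real.sq_sqrt hZ2nn
    obtain ⟨hr0, hr1, hq⟩ := q_bound hβpos hZnn hδ0 hδβ
    set r := (β - Real.sqrt δ)/(β + Z + 1) with hrdef
    set θ := r^2 with hθdef
    have hθ0 : 0 ≤ θ := sq_nonneg r
    have hθ1 : θ ≤ 1 := by rw [hθdef]; exact pow_le_one₀ hr0.le hr1.le
    refine ⟨min (g/(2*Z2+1)) (θ*g/(δ+1)),
      lt_min (div_pos hg (by linarith))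
        (div_pos (mul_pos (by rw [hθdef]; positivity) hg) (by linarith)),
      fun t ht htτ => ?_⟩
    have hppv : ∀ i : Fin d, i.val ≤ j.val → pp ⬝ᵥ v i = 0 := by
      intro i hij
      have h1 : pp ⬝ᵥ (A *ᵥ v i) = lam i * (pp ⬝ᵥ v i) := by
        rw [hve i, dotProduct_smul, smul_eq_mul]
      have h3 : (A *ᵥ pp) ⬝ᵥ v i = pp ⬝ᵥ (A *ᵥ v i) := by rw [mulVec_dot, hAt]
      have h2 : pp ⬝ᵥ (A *ᵥ v i) = lam j' * (pp ⬝ᵥ v i) := by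
        rw [← h3, hppe, smul_dotProduct, smul_eq_mul]
      have hlt : lam j' < lam i := by
        have h5 : lam j ≤ lam i := hanti (Fin.le_def.mpr hij)
        have h6 : lam j' < R * lam j' := (lt_mul_iff_one_lt_left (hpos j')).mpr hR
        linarith only [h5, h6, hcase]
      have h6 : lam i * (pp ⬝ᵥ v i) = lam j' * (pp ⬝ᵥ v i) := by rw [← h1, h2]
      have h7 : (lam i - lam j') * (pp ⬝ᵥ v i) = 0 := by linear_combination h6
      rcases mul_eq_zero.mp h7 with h8 | h8
      · exact absurd h8 (ne_of_gt (sub_pos.mpr hlt))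
      · exact h8
    have hζpp : ζ ⬝ᵥ pp = lam j' * (pp ⬝ᵥ pp) := by
      have h1 : ζ ⬝ᵥ pp = η ⬝ᵥ (A *ᵥ pp) := by rw [hζ, mulVec_dot, hAt]
      rw [h1, hppe, dotProduct_smul, smul_eq_mul, hηpp]
    have hzjv : ζ ⬝ᵥ v j = zj := by
      have h1 : ζ ⬝ᵥ v j = η ⬝ᵥ (A *ᵥ v j) := by rw [hζ, mulVec_dot, hAt]
      have h2 : η ⬝ᵥ (lam j • v j) = lam j * (η ⬝ᵥ v j) := by
        rw [dotProduct_smul, smul_eq_mul]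
      rw [h1, hve j, h2, hzjdef, hadef]
    have h2tZ : 2*t*Z2 ≤ g := by
      have h1 : t * (2*Z2+1) < g :=
        (lt_div_iff₀ (by linarith)).mp (lt_of_lt_of_le htτ (min_le_left _ _))
      linarith only [h1, ht]
    -- upper bound
    have hub : sortedEigs (A * (1 + t • vecMulVec η η) * A) j ≤ μj + 2*zj^2*t := by
      refine eig_le (hBh t) j hwo (by omega) (fun c => ?_)
      rw [quadB hAt η t, ← hζ]
      set i0 : Fin (d - j.val) := ⟨0, by omega⟩ with hi0
      set s0 := Finset.univ.erase i0 with hs0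
      have hival : (i0 : ℕ) = 0 := rfl
      have hw0 : w i0 = v j := by
        have h9 : (⟨j.val + (i0:ℕ), by omega⟩ : Fin d) = j := by
          apply Fin.ext
          simp [hival]
        calc w i0 = v ⟨j.val + (i0:ℕ), by omega⟩ := rfl
        _ = v j := by rw [h9]
      have hsplit : ∀ f : Fin (d - j.val) → ℝ, ∑ i, f i = (∑ i ∈ s0, f i) + f i0 :=
        fun f => (Finset.sum_erase_add _ _ (Finset.mem_univ i0)).symm
      set s' := ∑ i ∈ s0, (c i)^2 with hs'
      have hs'nn : 0 ≤ s' := Finset.sum_nonneg fun i _ => sq_nonneg _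
      have hxx : (∑ i, c i • w i) ⬝ᵥ (∑ i, c i • w i) = s' + (c i0)^2 := by
        rw [hwo.norm_sq, hsplit (fun i => (c i)^2)]
      have hAx2 : (A *ᵥ ∑ i, c i • w i) ⬝ᵥ (A *ᵥ ∑ i, c i • w i)
          ≤ μj' * s' + μj * (c i0)^2 := by
        rw [hAxw c, hwo.norm_sq,
          hsplit (fun i => (c i * lam ⟨j.val + i.val, by omega⟩)^2)]
        refine add_le_add ?_ ?_
        · rw [hs', Finset.mul_sum]
          refine Finset.sum_le_sum fun i hi => ?_
          have hine : 1 ≤ i.val := by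
            rcases Finset.mem_erase.mp hi with ⟨hne, _⟩
            have h9 : i.val ≠ 0 := fun h0 => hne (Fin.ext (by simp [hi0, h0]))
            omega
          have hle2 : lam ⟨j.val + i.val, by omega⟩ ≤ lam j' :=
            hanti (by rw [hj'def]; simp only [Fin.le_def]; omega)
          have hp2 := hpos ⟨j.val + i.val, by omega⟩
          have h4 : lam ⟨j.val + i.val, by omega⟩^2 ≤ lam j'^2 :=
            pow_le_pow_left₀ hp2.le hle2 2
          calc (c i * lam ⟨j.val + i.val, by omega⟩)^2
              = (c i)^2 * lam ⟨j.val + i.val, by omega⟩^2 := by ring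
          _ ≤ (c i)^2 * lam j'^2 := mul_le_mul_of_nonneg_left h4 (sq_nonneg _)
          _ = μj' * (c i)^2 := by rw [hμj']; ring
        · have hle2 : lam ⟨j.val + (i0 : ℕ), by omega⟩ ≤ lam j :=
            hanti (by simp only [Fin.le_def]; omega)
          have hp2 := hpos ⟨j.val + (i0 : ℕ), by omega⟩
          have h4 : lam ⟨j.val + (i0 : ℕ), by omega⟩^2 ≤ lam j^2 :=
            pow_le_pow_left₀ hp2.le hle2 2
          calc (c i0 * lam ⟨j.val + (i0 : ℕ), by omega⟩)^2
              = (c i0)^2 * lam ⟨j.val + (i0 : ℕ), by omega⟩^2 := by ring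
          _ ≤ (c i0)^2 * lam j^2 := mul_le_mul_of_nonneg_left h4 (sq_nonneg _)
          _ = μj * (c i0)^2 := by rw [hμj]; ring
      have hζx : ζ ⬝ᵥ (∑ i, c i • w i) = (∑ i ∈ s0, c i * (ζ ⬝ᵥ w i)) + c i0 * zj := by
        rw [dot_sum_right' Finset.univ (fun i => c i • w i) ζ]
        simp only [dotProduct_smul, smul_eq_mul]
        rw [hsplit (fun i => c i * (ζ ⬝ᵥ w i)), hw0, hzjv]
      have hζy2 : (∑ i ∈ s0, c i * (ζ ⬝ᵥ w i))^2 ≤ Z2 * s' := by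
        have h1 : ∑ i ∈ s0, c i * (ζ ⬝ᵥ w i) = ζ ⬝ᵥ (∑ i ∈ s0, c i • w i) := by
          rw [dot_sum_right' s0 (fun i => c i • w i) ζ]
          simp only [dotProduct_smul, smul_eq_mul]
        have h2 := cauchy_dot ζ (∑ i ∈ s0, c i • w i)
        have h3 : (∑ i ∈ s0, c i • w i) ⬝ᵥ (∑ i ∈ s0, c i • w i) = s' := by
          rw [hwo.dot_sum_sum' s0 s0, Finset.inter_self, hs']
          exact Finset.sum_congr rfl fun i _ => (pow_two (c i)).symm
        rw [h1]
        rw [h3] at h2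
        exact h2
      rw [hζx, hxx]
      set S := ∑ i ∈ s0, c i * (ζ ⬝ᵥ w i) with hS
      have hsq2 : (S + c i0 * zj)^2 ≤ 2*S^2 + 2*(c i0)^2*zj^2 := by
        linarith only [sq_nonneg (S - c i0 * zj)]
      have hfin1 : t*(S + c i0*zj)^2 ≤ 2*t*Z2*s' + 2*t*zj^2*(c i0)^2 := by
        have h6 := mul_le_mul_of_nonneg_left hsq2 ht.le
        have h7 := mul_le_mul_of_nonneg_left hζy2 ht.le
        linarith only [h6, h7]
      have h8 : (2*t*Z2)*s' ≤ g*s' := mul_le_mul_of_nonneg_right h2tZ hs'nn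
      have e1 : (μj + 2*zj^2*t) * (s' + (c i0)^2)
          = μj'*s' + μj*(c i0)^2 + (g*s' + 2*zj^2*t*s') + 2*zj^2*t*(c i0)^2 := by
        rw [hgdef]; ring
      have e4 : (0:ℝ) ≤ 2*zj^2*t*s' :=
        mul_nonneg (mul_nonneg (by positivity) ht.le) hs'nn
      linarith only [hAx2, hfin1, h8, e1, e4]
    -- lower bound
    have hlb : μj' + δ*t ≤ sortedEigs (A * (1 + t • vecMulVec η η) * A) j' := by
      set L : Fin (j.val+2) := ⟨j.val+1, Nat.lt_succ_self _⟩ with hL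
      set u : Fin (j.val+2) → Fin d → ℝ :=
        (fun i => if i.val < j.val+1 then v ⟨i.val, by omega⟩ else π⁻¹ • pp) with hu
      have hLval : (L : ℕ) = j.val + 1 := rfl
      have huL : u L = π⁻¹ • pp := by
        rw [hu]
        simp only []
        rw [if_neg (by omega)]
      have hult : ∀ i : Fin (j.val+2), i.val < j.val+1 → u i = v ⟨i.val, by omega⟩ := by
        intro i h
        rw [hu]
        simp only []
        rw [if_pos h]
      have hppvc : ∀ i : Fin (j.val+2), i.val < j.val+1 → pp ⬝ᵥ v ⟨i.val, by omega⟩ = 0 :=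
        fun i h => hppv ⟨i.val, by omega⟩ (by exact Nat.lt_succ_iff.mp h)
      have huo : OrthoFam u := by
        intro i k
        by_cases hi : i.val < j.val+1 <;> by_cases hk : k.val < j.val+1
        · rw [hult i hi, hult k hk, hvo.dot]
          by_cases h : i = k
          · subst h; simp
          · rw [if_neg (fun hc => h (Fin.ext (by simpa [Fin.ext_iff] using hc))), if_neg h]
        · have hik : i ≠ k := fun h => hk (h ▸ hi)
          rw [hult i hi, hu]
          simp only []
          rw [if_neg hk, if_neg hik, dotProduct_smul, dotProduct_comm, hppvc i hi,
            smul_eq_mul, mul_zero]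
        · have hik : i ≠ k := fun h => hi (h ▸ hk)
          rw [hult k hk, hu]
          simp only []
          rw [if_neg hi, if_neg hik, smul_dotProduct, hppvc k hk, smul_eq_mul, mul_zero]
        · have hik : i = k := Fin.ext (by omega)
          subst hik
          rw [if_pos rfl, hu]
          simp only []
          rw [if_neg hi, smul_dotProduct, dotProduct_smul, smul_eq_mul, smul_eq_mul, ← hππ]
          field_simp
        
      have hue : ∀ i, A *ᵥ u i
          = (if i.val < j.val+1 then lam ⟨i.val, by omega⟩ else lam j') • u i := by
        intro i
        by_cases hi : i.val < j.val+1
        · rw [hult i hi, if_pos hi, hve]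
        · rw [hu]
          simp only []
          rw [if_neg hi, if_neg hi, Matrix.mulVec_smul, hppe, smul_comm]
      have hAxu : ∀ c : Fin (j.val+2) → ℝ, A *ᵥ (∑ i, c i • u i)
          = ∑ i, (c i * (if i.val < j.val+1 then lam ⟨i.val, by omega⟩ else lam j')) • u i := by
        intro c
        rw [mulVec_sum_smul]
        refine Finset.sum_congr rfl fun i _ => ?_
        rw [hue i, smul_smul]
      refine eig_ge (hBh t) j' huo (Nat.lt_succ_self _) (fun c => ?_)
      rw [quadB hAt η t, ← hζ]
      set s0 := Finset.univ.erase L with hs0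
      have hsplit : ∀ f : Fin (j.val+2) → ℝ, ∑ i, f i = (∑ i ∈ s0, f i) + f L :=
        fun f => (Finset.sum_erase_add _ _ (Finset.mem_univ L)).symm
      set s' := ∑ i ∈ s0, (c i)^2 with hs'
      have hs'nn : 0 ≤ s' := Finset.sum_nonneg fun i _ => sq_nonneg _
      have hxx : (∑ i, c i • u i) ⬝ᵥ (∑ i, c i • u i) = s' + (c L)^2 := by
        rw [huo.norm_sq, hsplit (fun i => (c i)^2)]
      have hmemlt : ∀ i ∈ s0, i.val < j.val+1 := by
        intro i hi
        rcases Finset.mem_erase.mp hi with ⟨hne, _⟩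
        have h9 : i.val ≠ j.val+1 := fun h0 => hne (Fin.ext (by rw [hLval, h0]))
        omega
      have hAx2 : μj * s' + μj' * (c L)^2
          ≤ (A *ᵥ ∑ i, c i • u i) ⬝ᵥ (A *ᵥ ∑ i, c i • u i) := by
        rw [hAxu c, huo.norm_sq,
          hsplit (fun i => (c i * (if i.val < j.val+1 then lam ⟨i.val, by omega⟩ else lam j'))^2)]
        refine add_le_add ?_ ?_
        · rw [hs', Finset.mul_sum]
          refine Finset.sum_le_sum fun i hi => ?_
          have hilt := hmemlt i hi
          rw [if_pos hilt]
          have hge : lam j ≤ lam ⟨i.val, by omega⟩ :=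
            hanti (by simp only [Fin.le_def]; omega)
          have hp2 := hpos j
          have h4 : lam j^2 ≤ lam ⟨i.val, by omega⟩^2 :=
            pow_le_pow_left₀ hp2.le hge 2
          calc μj * (c i)^2 = (c i)^2 * lam j^2 := by rw [hμj]; ring
          _ ≤ (c i)^2 * lam ⟨i.val, by omega⟩^2 :=
              mul_le_mul_of_nonneg_left h4 (sq_nonneg _)
          _ = (c i * lam ⟨i.val, by omega⟩)^2 := by ring
        · rw [if_neg (by omega)]
          rw [hμj']
          exact le_of_eq (by ring)
      have hβu : ζ ⬝ᵥ u L = β := by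
        rw [huL, dotProduct_smul, hζpp, smul_eq_mul, hβdef, ← hππ]
        field_simp
      have hζx : ζ ⬝ᵥ (∑ i, c i • u i) = (∑ i ∈ s0, c i * (ζ ⬝ᵥ u i)) + c L * β := by
        rw [dot_sum_right' Finset.univ (fun i => c i • u i) ζ]
        simp only [dotProduct_smul, smul_eq_mul]
        rw [hsplit (fun i => c i * (ζ ⬝ᵥ u i)), hβu]
      have hW2 : (∑ i ∈ s0, c i * (ζ ⬝ᵥ u i))^2 ≤ Z^2 * s' := by
        rw [hZZ]
        have h1 : ∑ i ∈ s0, c i * (ζ ⬝ᵥ u i) = ζ ⬝ᵥ (∑ i ∈ s0, c i • u i) := by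
          rw [dot_sum_right' s0 (fun i => c i • u i) ζ]
          simp only [dotProduct_smul, smul_eq_mul]
        have h2 := cauchy_dot ζ (∑ i ∈ s0, c i • u i)
        have h3 : (∑ i ∈ s0, c i • u i) ⬝ᵥ (∑ i ∈ s0, c i • u i) = s' := by
          rw [huo.dot_sum_sum' s0 s0, Finset.inter_self, hs']
          exact Finset.sum_congr rfl fun i _ => (pow_two (c i)).symm
        rw [h1]
        rw [h3] at h2
        exact h2
      have hclaim : δ*t*(s' + (c L)^2)
          ≤ g*s' + t*((∑ i ∈ s0, c i * (ζ ⬝ᵥ u i)) + (c L)*β)^2 :=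
        claim_arith hg hδ0 hβpos hZnn hs'nn hW2 ht
          (le_trans (le_of_lt htτ) (min_le_right _ _)) hθ0 hθ1 hq
      rw [hζx, hxx]
      have e2 : (μj' + δ*t)*(s'+(c L)^2) = μj'*s' + μj'*(c L)^2 + δ*t*(s'+(c L)^2) := by ring
      have e3 : μj*s' - μj'*s' = g*s' := by rw [hgdef]; ring
      linarith only [hAx2, hclaim, e2, e3]
    have h2zj : 2*zj^2 = R^2 * δ := by
      rw [hδdef]
      field_simp
    calc sortedEigs (A * (1 + t • vecMulVec η η) * A) j ≤ μj + 2*zj^2*t := hub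
    _ = R^2 * (μj' + δ*t) := by rw [hμeq, h2zj]; ring
    _ ≤ R^2 * sortedEigs (A * (1 + t • vecMulVec η η) * A) j' :=
        mul_le_mul_of_nonneg_left hlb (by positivity)
  · -- strict inequality case
    have hstrict : μj < R^2 * μj' := by
      have h1 : lam j < R * lam j' := lt_of_le_of_ne hle hcase
      have h2 : lam j^2 < (R * lam j')^2 := by
        apply pow_lt_pow_left₀ h1 (hpos j).le
        norm_num
      calc μj = lam j^2 := hμj
      _ < (R * lam j')^2 := h2
      _ = R^2 * μj' := by rw [hμj']; ring
    refine ⟨(R^2*μj' - μj)/(Z2+1), div_pos (by linarith) (by linarith), fun t ht htτ => ?_⟩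
    have hub : sortedEigs (A * (1 + t • vecMulVec η η) * A) j ≤ μj + t * Z2 := by
      refine eig_le (hBh t) j hwo (by omega) (fun c => ?_)
      rw [quadB hAt η t]
      have h1 : (A *ᵥ ∑ i, c i • w i) ⬝ᵥ (A *ᵥ ∑ i, c i • w i)
          ≤ μj * ((∑ i, c i • w i) ⬝ᵥ (∑ i, c i • w i)) := by
        rw [hAxw c, hwo.norm_sq, hwo.norm_sq, Finset.mul_sum]
        refine Finset.sum_le_sum fun i _ => ?_
        have hle2 : lam ⟨j.val + i.val, by omega⟩ ≤ lam j :=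
          hanti (by simp [Fin.le_def])
        have hp2 := hpos ⟨j.val + i.val, by omega⟩
        have h4 : lam ⟨j.val + i.val, by omega⟩^2 ≤ lam j^2 :=
          pow_le_pow_left₀ hp2.le hle2 2
        calc (c i * lam ⟨j.val + i.val, by omega⟩)^2
            = (c i)^2 * lam ⟨j.val + i.val, by omega⟩^2 := by ring
        _ ≤ (c i)^2 * lam j^2 := mul_le_mul_of_nonneg_left h4 (sq_nonneg (c i))
        _ = μj * (c i)^2 := by rw [hμj]; ring
      have h2 := cauchy_dot ζ (∑ i, c i • w i)
      have h5 : t * (ζ ⬝ᵥ ∑ i, c i • w i)^2 ≤ t * (Z2 * ((∑ i, c i • w i) ⬝ᵥ (∑ i, c i • w i))) :=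
        mul_le_mul_of_nonneg_left h2 ht.le
      have e : (μj + t*Z2) * ((∑ i, c i • w i) ⬝ᵥ (∑ i, c i • w i))
          = μj * ((∑ i, c i • w i) ⬝ᵥ (∑ i, c i • w i))
            + t*(Z2*((∑ i, c i • w i) ⬝ᵥ (∑ i, c i • w i))) := by ring
      linarith only [h1, h5, e]
    have hlb : μj' ≤ sortedEigs (A * (1 + t • vecMulVec η η) * A) j' := by
      refine eig_ge (hBh t) j' hu1o (Nat.lt_succ_self _) (fun c => ?_)
      rw [quadB hAt η t]
      have h1 : μj' * ((∑ i, c i • u1 i) ⬝ᵥ (∑ i, c i • u1 i))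
          ≤ (A *ᵥ ∑ i, c i • u1 i) ⬝ᵥ (A *ᵥ ∑ i, c i • u1 i) := by
        rw [hAxu1 c, hu1o.norm_sq, hu1o.norm_sq, Finset.mul_sum]
        refine Finset.sum_le_sum fun i _ => ?_
        have hle2 : lam j' ≤ lam ⟨i.val, by omega⟩ := by
          refine hanti ?_
          rw [hj'def]
          simp only [Fin.le_def]
          omega
        have hp2 := hpos ⟨i.val, by omega⟩
        have h4 : lam j'^2 ≤ lam ⟨i.val, by omega⟩^2 :=
          pow_le_pow_left₀ (hpos j').le hle2 2
        calc μj' * (c i)^2 = (c i)^2 * lam j'^2 := by rw [hμj']; ring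
        _ ≤ (c i)^2 * lam ⟨i.val, by omega⟩^2 := mul_le_mul_of_nonneg_left h4 (sq_nonneg (c i))
        _ = (c i * lam ⟨i.val, by omega⟩)^2 := by ring
      linarith [mul_nonneg ht.le (sq_nonneg (ζ ⬝ᵥ ∑ i, c i • u1 i))]
    have htZ : t * Z2 < R^2*μj' - μj := by
      have h1 : t * (Z2+1) < R^2*μj' - μj := (lt_div_iff₀ (by linarith)).mp htτ
      linarith only [h1, ht]
    calc sortedEigs (A * (1 + t • vecMulVec η η) * A) j ≤ μj + t * Z2 := hub
    _ ≤ R^2 * μj' := by linarith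
    _ ≤ R^2 * sortedEigs (A * (1 + t • vecMulVec η η) * A) j' :=
        mul_le_mul_of_nonneg_left hlb (by positivity)

end Key

set_option maxHeartbeats 1000000 in
/-- Let `R > 1`, let `A ∈ 𝒟_R` be symmetric positive definite (so its singular
values equal its eigenvalues `sortedEigs A j`), and for each `j` let `p j` be the orthogonal
projection of `η` onto the eigenspace `E_j` of `A` (characterized by `p j ∈ E_j` and
`η − p j ⊥ E_j`). If `|p j|² < ½|p (j+1)|²` whenever `λ_j(A) = R·λ_{j+1}(A)`, then for all
sufficiently small `ε > 0` one has `A_η(ε)/s₁(A_η(ε)) ∈ 𝒟_R`, where `A_η(ε) = A(Id + ε η⊗η)`. -/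
theorem stmt9 (d : ℕ) (hd : 1 ≤ d) (R : ℝ) (hR : 1 < R)
    (A : Matrix (Fin d) (Fin d) ℝ) (hA : A.PosDef) (hADR : A ∈ DR d hd R)
    (η : Fin d → ℝ) (p : Fin d → Fin d → ℝ)
    (hp1 : ∀ j : Fin d, A.mulVec (p j) = sortedEigs A j • p j)
    (hp2 : ∀ (j : Fin d) (q : Fin d → ℝ),
      A.mulVec q = sortedEigs A j • q → (η - p j) ⬝ᵥ q = 0)
    (hcond : ∀ (j : Fin d) (h : j.val + 1 < d),
      sortedEigs A j = R * sortedEigs A ⟨j.val + 1, h⟩ →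
      p j ⬝ᵥ p j < (1 / 2) * (p ⟨j.val + 1, h⟩ ⬝ᵥ p ⟨j.val + 1, h⟩)) :
    ∃ ε₀ > (0 : ℝ), ∀ ε : ℝ, 0 < ε → ε < ε₀ →
      (sval (A * (1 + ε • vecMulVec η η)) ⟨0, hd⟩)⁻¹ • (A * (1 + ε • vecMulVec η η))
        ∈ DR d hd R := by
  have hH := hA.1
  have hAt : Aᵀ = A := transpose_eq_of_hermitian hH
  have hR0 : (0:ℝ) < R := by linarith
  have hsveq : sval A = sortedEigs A := sval_eq_sortedEigs hA
  have hq0 : 0 ≤ η ⬝ᵥ η := Finset.sum_nonneg (fun i _ => mul_self_nonneg (η i))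
  -- per-index thresholds
  have H : ∀ j : Fin d, ∃ τ, 0 < τ ∧ ∀ (hj : j.val + 1 < d), ∀ t : ℝ, 0 < t → t < τ →
      sortedEigs (A * (1 + t • vecMulVec η η) * A) j
        ≤ R^2 * sortedEigs (A * (1 + t • vecMulVec η η) * A) ⟨j.val+1, hj⟩ := by
    intro j
    by_cases hj : j.val + 1 < d
    · have hle : sortedEigs A j ≤ R * sortedEigs A ⟨j.val+1, hj⟩ := by
        rw [← hsveq]
        exact hADR.2.2 j hj
      have hpeq : sortedEigs A j = R * sortedEigs A ⟨j.val+1, hj⟩ →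
          ∃ pp : Fin d → ℝ, A *ᵥ pp = sortedEigs A ⟨j.val+1, hj⟩ • pp ∧ 0 < pp ⬝ᵥ pp ∧
            η ⬝ᵥ pp = pp ⬝ᵥ pp ∧ (η ⬝ᵥ canB hA.1 j)^2 < (1/2) * (pp ⬝ᵥ pp) := by
        intro heq
        refine ⟨p ⟨j.val+1, hj⟩, hp1 ⟨j.val+1, hj⟩, ?_, ?_, ?_⟩
        · have h1 := hcond j hj heq
          have h2 : 0 ≤ p j ⬝ᵥ p j := Finset.sum_nonneg (fun i _ => mul_self_nonneg _)
          linarith only [h1, h2]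
        · have h1 := hp2 ⟨j.val+1, hj⟩ (p ⟨j.val+1, hj⟩) (hp1 ⟨j.val+1, hj⟩)
          rw [sub_dotProduct] at h1
          linarith only [h1]
        · have h1 := hp2 j (canB hA.1 j) (canB_eigen hA.1 j)
          rw [sub_dotProduct] at h1
          have h2 : η ⬝ᵥ canB hA.1 j = p j ⬝ᵥ canB hA.1 j := by linarith only [h1]
          have h3 := cauchy_dot (p j) (canB hA.1 j)
          have h4 : canB hA.1 j ⬝ᵥ canB hA.1 j = 1 := by
            rw [(canB_ortho hA.1).dot j j, if_pos rfl]
          rw [h4, mul_one] at h3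
          have h5 := hcond j hj heq
          rw [h2]
          linarith only [h3, h5]
      obtain ⟨τ, hτ0, hτ⟩ := key hR hA η j hj hle hpeq
      exact ⟨τ, hτ0, fun _ => hτ⟩
    · exact ⟨1, one_pos, fun hj' => absurd hj' hj⟩
  choose τ hτ0 hτ using H
  have hne : (Finset.univ : Finset (Fin d)).Nonempty := ⟨⟨0, hd⟩, Finset.mem_univ _⟩
  set T := Finset.univ.inf' hne τ with hT
  have hT0 : 0 < T := (Finset.lt_inf'_iff hne).mpr (fun j _ => hτ0 j)
  set C := 2 + η ⬝ᵥ η with hC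
  have hC0 : 0 < C := by rw [hC]; linarith only [hq0]
  refine ⟨min 1 (T / C), lt_min one_pos (div_pos hT0 hC0), fun ε hε hεε => ?_⟩
  have hε1 : ε ≤ 1 := le_of_lt (lt_of_lt_of_le hεε (min_le_left _ _))
  have hεTC : ε < T / C := lt_of_lt_of_le hεε (min_le_right _ _)
  set t := 2*ε + ε^2*(η ⬝ᵥ η) with htdef
  have ht : 0 < t := by
    have h1 : 0 ≤ ε^2*(η ⬝ᵥ η) := mul_nonneg (sq_nonneg ε) hq0
    rw [htdef]
    linarith only [hε, h1]
  have htT : ∀ j : Fin d, t < τ j := by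
    intro j
    have h1 : t ≤ ε * C := by
      have h2 : 0 ≤ ε * (η ⬝ᵥ η) * (1 - ε) := by
        apply mul_nonneg (mul_nonneg hε.le hq0)
        linarith only [hε1]
      rw [htdef, hC]
      nlinarith [h2]
    have h2 : ε * C < T := (lt_div_iff₀ hC0).mp hεTC
    calc t ≤ ε * C := h1
    _ < T := h2
    _ ≤ τ j := Finset.inf'_le τ (Finset.mem_univ j)
  -- the perturbed matrix
  set M := A * (1 + ε • vecMulVec η η) with hM
  have hS : (1 + ε • vecMulVec η η).PosDef := S_posDef η hε.le
  have hMunit : IsUnit M := hA.isUnit.mul hS.isUnit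
  have hMtM : (Mᵀ * M).PosDef := posDef_transpose_mul_self hMunit
  have hBeq : M * Mᵀ = A * (1 + t • vecMulVec η η) * A := B_eq hAt η ε
  have hflip : sortedEigs (Mᵀ * M) = sortedEigs (A * (1 + t • vecMulVec η η) * A) := by
    rw [← sortedEigs_flip hMunit, hBeq]
  have hbpos : ∀ i, 0 < sortedEigs (Mᵀ * M) i := sortedEigs_pos hMtM
  have hsvM : ∀ i, sval M i = Real.sqrt (sortedEigs (Mᵀ * M) i) := fun i => rfl
  have hsvpos : ∀ i, 0 < sval M i := fun i => by
    rw [hsvM i]; exact Real.sqrt_pos.mpr (hbpos i)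
  set s1 := sval M ⟨0, hd⟩ with hs1def
  have hs1 : 0 < s1 := hsvpos _
  -- scaling of singular values
  have hsvs : ∀ i, sval (s1⁻¹ • M) i = s1⁻¹ * sval M i := by
    intro i
    have h1 : (s1⁻¹ • M)ᵀ * (s1⁻¹ • M) = (s1⁻¹ * s1⁻¹) • (Mᵀ * M) := by
      rw [Matrix.transpose_smul, Matrix.smul_mul, Matrix.mul_smul, smul_smul]
    rw [sval, h1, sortedEigs_smul hMtM.1 (by positivity : (0:ℝ) ≤ s1⁻¹ * s1⁻¹)]
    rw [Real.sqrt_mul (by positivity), Real.sqrt_mul_self (by positivity)]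
    rfl
  refine ⟨?_, ?_, ?_⟩
  · -- unit
    rw [Matrix.isUnit_iff_isUnit_det, Matrix.det_smul, isUnit_iff_ne_zero]
    exact mul_ne_zero (pow_ne_zero _ (inv_ne_zero hs1.ne'))
      (((Matrix.isUnit_iff_isUnit_det M).mp hMunit).ne_zero)
  · -- normalization
    rw [hsvs ⟨0, hd⟩, ← hs1def, inv_mul_cancel₀ hs1.ne']
  · -- ratios
    intro j hj
    have hcore : sval M j ≤ R * sval M ⟨j.val+1, hj⟩ := by
      have h1 : sortedEigs (Mᵀ * M) j ≤ R^2 * sortedEigs (Mᵀ * M) ⟨j.val+1, hj⟩ := by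
        rw [hflip]
        exact hτ j hj t ht (htT j)
      rw [hsvM j, hsvM ⟨j.val+1, hj⟩]
      calc Real.sqrt (sortedEigs (Mᵀ * M) j)
          ≤ Real.sqrt (R^2 * sortedEigs (Mᵀ * M) ⟨j.val+1, hj⟩) := Real.sqrt_le_sqrt h1
      _ = R * Real.sqrt (sortedEigs (Mᵀ * M) ⟨j.val+1, hj⟩) := by
          rw [Real.sqrt_mul (sq_nonneg R), Real.sqrt_sq hR0.le]
    rw [hsvs j, hsvs ⟨j.val+1, hj⟩]
    calc s1⁻¹ * sval M j ≤ s1⁻¹ * (R * sval M ⟨j.val+1, hj⟩) :=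
        mul_le_mul_of_nonneg_left hcore (inv_nonneg.mpr hs1.le)
    _ = R * (s1⁻¹ * sval M ⟨j.val+1, hj⟩) := by ring
end

section
/- Let M be a d × d real symmetric positive-definite matrix, A a d × d real symmetric invertible matrix, η ∈ ℝᵈ, and A_η(ε) = A(Id + ε η⊗η). Then for every ε ≥ 0, Tr(A_η(ε)ᵀ M A_η(ε)) ≥ Tr(AMA) + 2ε·λ_d(M)·|Aη|², where λ_d(M) > 0 denotes the smallest eigenvalue of M. -/
open Matrix

/-- Quadratic form lower bound by a common lower bound on eigenvalues. -/
lemma quadForm_ge_of_le_eigenvalues {d : ℕ} (M : Matrix (Fin d) (Fin d) ℝ)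
    (hM : M.IsHermitian) (c : ℝ) (hc : ∀ i, c ≤ hM.eigenvalues i) (x : Fin d → ℝ) :
    c * (x ⬝ᵥ x) ≤ x ⬝ᵥ M.mulVec x := by
  have hps : (M - c • 1).PosSemidef := by
    have h1 : M - c • 1 = (hM.eigenvectorUnitary : Matrix (Fin d) (Fin d) ℝ) *
        diagonal (fun i => hM.eigenvalues i - c) *
        (star (hM.eigenvectorUnitary : Matrix (Fin d) (Fin d) ℝ)) := by
      have hU : (hM.eigenvectorUnitary : Matrix (Fin d) (Fin d) ℝ) *
          (star (hM.eigenvectorUnitary : Matrix (Fin d) (Fin d) ℝ)) = 1 :=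
        (Matrix.mem_unitaryGroup_iff).mp hM.eigenvectorUnitary.2
      have hd : (diagonal (fun i => hM.eigenvalues i - c) : Matrix (Fin d) (Fin d) ℝ)
          = diagonal (RCLike.ofReal ∘ hM.eigenvalues) - c • 1 := by
        simp [diagonal_sub, Matrix.smul_one_eq_diagonal, RCLike.ofReal]
      have hs := hM.spectral_theorem
      rw [Unitary.conjStarAlgAut_apply] at hs
      rw [hd, Matrix.mul_sub, Matrix.sub_mul, ← hs]
      congr 1
      rw [Matrix.mul_smul, Matrix.smul_mul, mul_one, hU]
    rw [h1]
    exact (posSemidef_diagonal_iff.mpr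
      (fun i => sub_nonneg.mpr (hc i))).mul_mul_conjTranspose_same _
  have := hps.dotProduct_mulVec_nonneg x
  simp only [star_trivial, sub_mulVec, smul_mulVec, one_mulVec, dotProduct_sub,
    dotProduct_smul, smul_eq_mul] at this
  linarith

lemma sorted_last_le {d : ℕ} (hd : 1 ≤ d) (f : Fin d → ℝ) (i : Fin d) :
    (f ∘ Tuple.sort f) (Fin.rev ⟨d - 1, Nat.sub_lt hd Nat.one_pos⟩) ≤ f i := by
  have h0 : (Fin.rev ⟨d - 1, Nat.sub_lt hd Nat.one_pos⟩ : Fin d) = ⟨0, by omega⟩ := by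
    ext; simp [Fin.rev]; omega
  rw [h0]
  have := Tuple.monotone_sort f (a := ⟨0, by omega⟩) (b := (Tuple.sort f).symm i)
    (by simp [Fin.le_def])
  simpa using this

lemma trace_mul_vecMulVec {d : ℕ} (C : Matrix (Fin d) (Fin d) ℝ) (η : Fin d → ℝ) :
    Matrix.trace (C * vecMulVec η η) = η ⬝ᵥ C.mulVec η := by
  simp [Matrix.trace, Matrix.mul_apply, vecMulVec_apply, dotProduct, mulVec, Finset.mul_sum]
  exact Finset.sum_congr rfl fun i _ => Finset.sum_congr rfl fun j _ => by ring

lemma vecMulVec_mul_vecMulVec {d : ℕ} (η : Fin d → ℝ) :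
    vecMulVec η η * vecMulVec η η = (η ⬝ᵥ η) • vecMulVec η η := by
  ext i j
  simp [Matrix.mul_apply, vecMulVec_apply, dotProduct, Finset.sum_mul, Finset.mul_sum]
  congr 1; ext k; ring

/-- For `M` symmetric positive definite, `A` symmetric invertible,
`A_η(ε) = A(Id + ε η⊗η)` and `ε ≥ 0`,
`Tr(A_η(ε)ᵀ M A_η(ε)) ≥ Tr(AMA) + 2ε·λ_d(M)·|Aη|²`,
where `λ_d(M) = sortedEigs M (d−1)` is the smallest eigenvalue of `M`. -/
theorem stmt11 (d : ℕ) (hd : 1 ≤ d) (M A : Matrix (Fin d) (Fin d) ℝ)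
    (hM : M.PosDef) (hA : A.IsSymm) (hAu : IsUnit A) (η : Fin d → ℝ) :
    ∀ ε : ℝ, 0 ≤ ε →
      Matrix.trace ((A * (1 + ε • vecMulVec η η))ᵀ * M * (A * (1 + ε • vecMulVec η η)))
        ≥ Matrix.trace (A * M * A)
          + 2 * ε * sortedEigs M ⟨d - 1, by omega⟩ * (A.mulVec η ⬝ᵥ A.mulVec η) := by
  intro ε hε
  set B : Matrix (Fin d) (Fin d) ℝ := vecMulVec η η with hBdef
  have hB : B.IsSymm := by
    ext i j; simp [hBdef, Matrix.transpose_apply, vecMulVec_apply, mul_comm]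
  set C : Matrix (Fin d) (Fin d) ℝ := A * M * A with hCdef
  -- the expansion of the matrix product
  have hexp : (A * (1 + ε • B))ᵀ * M * (A * (1 + ε • B))
      = C + ε • (C * B) + ε • (B * C) + (ε * ε) • (B * C * B) := by
    rw [transpose_mul, transpose_add, transpose_one, transpose_smul, hA.eq, hB.eq]
    simp only [mul_add, add_mul, one_mul, mul_one, Matrix.smul_mul, Matrix.mul_smul, smul_smul,
      hCdef]
    noncomm_ring
  -- the quadratic form value
  set q : ℝ := η ⬝ᵥ C.mulVec η with hqdef
  have htrCB : Matrix.trace (C * B) = q := trace_mul_vecMulVec C η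
  have htrBC : Matrix.trace (B * C) = q := by rw [trace_mul_comm]; exact htrCB
  have htrBCB : Matrix.trace (B * C * B) = (η ⬝ᵥ η) * q := by
    rw [trace_mul_comm, ← mul_assoc, vecMulVec_mul_vecMulVec, Matrix.smul_mul, trace_smul,
      smul_eq_mul, htrBC]
  -- q in terms of Aη
  have hq : q = (A.mulVec η) ⬝ᵥ M.mulVec (A.mulVec η) := by
    rw [hqdef, hCdef, ← mulVec_mulVec, ← mulVec_mulVec, dotProduct_mulVec η A,
      ← mulVec_transpose, hA.eq]
  -- the minimal eigenvalue bound
  have hLam : ∀ i, sortedEigs M ⟨d - 1, by omega⟩ ≤ hM.isHermitian.eigenvalues i := by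
    intro i
    have : sortedEigs M ⟨d - 1, by omega⟩
        = (hM.isHermitian.eigenvalues ∘ Tuple.sort hM.isHermitian.eigenvalues)
          (Fin.rev ⟨d - 1, by omega⟩) := by
      rw [sortedEigs, dif_pos hM.isHermitian]
    rw [this]
    exact sorted_last_le hd _ i
  have hqge : sortedEigs M ⟨d - 1, by omega⟩ * (A.mulVec η ⬝ᵥ A.mulVec η) ≤ q := by
    rw [hq]
    exact quadForm_ge_of_le_eigenvalues M hM.isHermitian _ hLam _
  have hq0 : 0 ≤ q := by
    rw [hq]
    simpa using hM.posSemidef.dotProduct_mulVec_nonneg (A.mulVec η)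
  have hηη : 0 ≤ η ⬝ᵥ η := Finset.sum_nonneg fun i _ => mul_self_nonneg (η i)
  rw [hexp, trace_add, trace_add, trace_add, trace_smul, trace_smul, trace_smul,
    htrCB, htrBC, htrBCB]
  simp only [smul_eq_mul]
  nlinarith [mul_nonneg (mul_nonneg (mul_nonneg hε hε) hηη) hq0,
    mul_le_mul_of_nonneg_left hqge hε]
end

section
/- Let k ≥ 2, let M be a d × d real symmetric positive-definite matrix, and let A be a d × d real symmetric positive-definite matrix with operator norm ‖A‖ = 1 whose eigenvalues are s₁ ≥ … ≥ s_d > 0 with orthonormal eigenbasis w₁, …, w_d. Assume that λ₁(AMA) ≥ (1/k)·Tr(AMA). Then for every unit eigenvector q of AMA corresponding to the eigenvalue λ₁(AMA) and every j ∈ {1, …, d}, one has |⟨q, w_j⟩|/s_j ≤ k·λ₁(M)/λ_d(M). -/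
open Matrix

section helpers
variable {d : ℕ} {N : Matrix (Fin d) (Fin d) ℝ}

lemma inner_eq_dot (x y : Fin d → ℝ) :
    @inner ℝ (EuclideanSpace ℝ (Fin d)) _ (WithLp.toLp 2 x) (WithLp.toLp 2 y) = x ⬝ᵥ y := by
  simp [PiLp.inner_apply, RCLike.inner_apply, dotProduct, mul_comm]

lemma dot_expand (hN : N.IsHermitian) (x y : Fin d → ℝ) :
    x ⬝ᵥ y = ∑ i, (⇑(hN.eigenvectorBasis i) ⬝ᵥ x) * (⇑(hN.eigenvectorBasis i) ⬝ᵥ y) := by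
  have h := hN.eigenvectorBasis.sum_inner_mul_inner (𝕜 := ℝ) (WithLp.toLp 2 x) (WithLp.toLp 2 y)
  rw [inner_eq_dot] at h
  rw [← h]
  congr 1; funext i
  simp [PiLp.inner_apply, RCLike.inner_apply, dotProduct, mul_comm]

lemma herm_transpose (hN : N.IsHermitian) : Nᵀ = N := by
  rw [← conjTranspose_eq_transpose_of_trivial]; exact hN.eq

lemma basis_dot_mulVec (hN : N.IsHermitian) (v : Fin d → ℝ) (i : Fin d) :
    ⇑(hN.eigenvectorBasis i) ⬝ᵥ (N *ᵥ v)
      = hN.eigenvalues i * (⇑(hN.eigenvectorBasis i) ⬝ᵥ v) := by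
  rw [dotProduct_mulVec]
  have h2 : ⇑(hN.eigenvectorBasis i) ᵥ* N = N *ᵥ ⇑(hN.eigenvectorBasis i) := by
    conv_rhs => rw [← vecMul_transpose]
    rw [herm_transpose hN]
  rw [h2, hN.mulVec_eigenvectorBasis, smul_dotProduct, smul_eq_mul]

lemma sortedEigs_apply (hN : N.IsHermitian) (i : Fin d) :
    sortedEigs N i = hN.eigenvalues (Tuple.sort hN.eigenvalues i.rev) := by
  rw [sortedEigs, dif_pos hN]; rfl

lemma le_sortedEigs_max (hd : 1 ≤ d) (hN : N.IsHermitian) (i : Fin d) :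
    hN.eigenvalues i ≤ sortedEigs N ⟨0, hd⟩ := by
  rw [sortedEigs_apply hN]
  have h1 : hN.eigenvalues i
      = (hN.eigenvalues ∘ Tuple.sort hN.eigenvalues) ((Tuple.sort hN.eigenvalues)⁻¹ i) := by
    simp
  rw [h1]
  refine Tuple.monotone_sort hN.eigenvalues ?_
  rw [Fin.le_def, Fin.val_rev]
  have h2 := ((Tuple.sort hN.eigenvalues)⁻¹ i).isLt
  have h3 : ((⟨0, hd⟩ : Fin d) : ℕ) = 0 := rfl
  omega

lemma sortedEigs_min_le (hd : 1 ≤ d) (hN : N.IsHermitian) (i : Fin d) :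
    sortedEigs N ⟨d - 1, by omega⟩ ≤ hN.eigenvalues i := by
  rw [sortedEigs_apply hN]
  have h1 : hN.eigenvalues i
      = (hN.eigenvalues ∘ Tuple.sort hN.eigenvalues) ((Tuple.sort hN.eigenvalues)⁻¹ i) := by
    simp
  rw [h1]
  refine Tuple.monotone_sort hN.eigenvalues ?_
  rw [Fin.le_def, Fin.val_rev]
  have h3 : ((⟨d - 1, by omega⟩ : Fin d) : ℕ) = d - 1 := rfl
  omega

lemma sortedEigs_pos_s12 (hN : N.PosDef) (i : Fin d) : 0 < sortedEigs N i := by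
  rw [sortedEigs_apply hN.1]; exact hN.eigenvalues_pos _

lemma rayleigh_le_s12 (hd : 1 ≤ d) (hN : N.IsHermitian) (v : Fin d → ℝ) :
    v ⬝ᵥ (N *ᵥ v) ≤ sortedEigs N ⟨0, hd⟩ * (v ⬝ᵥ v) := by
  rw [dot_expand hN v (N *ᵥ v), dot_expand hN v v, Finset.mul_sum]
  apply Finset.sum_le_sum
  intro i _
  rw [basis_dot_mulVec hN v i]
  have := sq_nonneg (⇑(hN.eigenvectorBasis i) ⬝ᵥ v)
  nlinarith [le_sortedEigs_max hd hN i]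

lemma rayleigh_ge (hd : 1 ≤ d) (hN : N.IsHermitian) (v : Fin d → ℝ) :
    sortedEigs N ⟨d - 1, by omega⟩ * (v ⬝ᵥ v) ≤ v ⬝ᵥ (N *ᵥ v) := by
  rw [dot_expand hN v (N *ᵥ v), dot_expand hN v v, Finset.mul_sum]
  apply Finset.sum_le_sum
  intro i _
  rw [basis_dot_mulVec hN v i]
  have := sq_nonneg (⇑(hN.eigenvectorBasis i) ⬝ᵥ v)
  nlinarith [sortedEigs_min_le hd hN i]

lemma mulVec_dot_self_le (hd : 1 ≤ d) (hN : N.IsHermitian)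
    (h0 : ∀ i, 0 ≤ hN.eigenvalues i) (v : Fin d → ℝ) :
    (N *ᵥ v) ⬝ᵥ (N *ᵥ v) ≤ (sortedEigs N ⟨0, hd⟩)^2 * (v ⬝ᵥ v) := by
  rw [dot_expand hN (N *ᵥ v) (N *ᵥ v), dot_expand hN v v, Finset.mul_sum]
  apply Finset.sum_le_sum
  intro i _
  rw [basis_dot_mulVec hN v i]
  have h2 := h0 i
  have h3 : hN.eigenvalues i ^ 2 ≤ (sortedEigs N ⟨0, hd⟩) ^ 2 :=
    pow_le_pow_left₀ h2 (le_sortedEigs_max hd hN i) 2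
  nlinarith [sq_nonneg (⇑(hN.eigenvectorBasis i) ⬝ᵥ v)]

lemma dot_cs (x y : Fin d → ℝ) : (x ⬝ᵥ y) * (x ⬝ᵥ y) ≤ (x ⬝ᵥ x) * (y ⬝ᵥ y) := by
  have := real_inner_mul_inner_self_le (F := EuclideanSpace ℝ (Fin d)) (WithLp.toLp 2 x) (WithLp.toLp 2 y)
  simp only [inner_eq_dot] at this
  exact this

lemma herm_dot_swap (hN : N.IsHermitian) (x y : Fin d → ℝ) :
    (N *ᵥ x) ⬝ᵥ y = x ⬝ᵥ (N *ᵥ y) := by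
  rw [dotProduct_mulVec x]
  have : x ᵥ* N = N *ᵥ x := by
    conv_lhs => rw [← herm_transpose hN, vecMul_transpose]
  rw [this]

end helpers

/-- Let `k ≥ 2`, let `M`, `A` be symmetric positive definite with
`‖A‖ = λ₁(A) = 1` (for symmetric positive-definite `A` the operator norm equals the largest
eigenvalue), let `w` be an orthonormal eigenbasis of `A` with eigenvalues
`s_j = sortedEigs A j`, and assume `λ₁(AMA) ≥ (1/k)·Tr(AMA)`. Then every unit eigenvector `q`
of `AMA` for `λ₁(AMA)` satisfies `|⟨q, w_j⟩|/s_j ≤ k·λ₁(M)/λ_d(M)` for every `j`. -/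

theorem stmt12 (d k : ℕ) (hd : 1 ≤ d) (hk : 2 ≤ k)
    (M A : Matrix (Fin d) (Fin d) ℝ) (hM : M.PosDef) (hA : A.PosDef)
    (hAnorm : sortedEigs A ⟨0, hd⟩ = 1)
    (w : Fin d → Fin d → ℝ)
    (hw : ∀ j : Fin d, A.mulVec (w j) = sortedEigs A j • w j)
    (hworth : ∀ i j : Fin d, w i ⬝ᵥ w j = if i = j then 1 else 0)
    (hlam : sortedEigs (A * M * A) ⟨0, hd⟩ ≥ (1 / (k : ℝ)) * Matrix.trace (A * M * A))
    (q : Fin d → ℝ) (hq1 : q ⬝ᵥ q = 1)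
    (hq2 : (A * M * A).mulVec q = sortedEigs (A * M * A) ⟨0, hd⟩ • q) :
    ∀ j : Fin d,
      |q ⬝ᵥ w j| / sortedEigs A j
        ≤ (k : ℝ) * sortedEigs M ⟨0, hd⟩ / sortedEigs M ⟨d - 1, by omega⟩ := by
  intro j
  have hAMA : (A * M * A).IsHermitian := by
    show (A * M * A)ᴴ = A * M * A
    rw [conjTranspose_mul, conjTranspose_mul, hA.1.eq, hM.1.eq, ← mul_assoc]
  set L := sortedEigs (A * M * A) ⟨0, hd⟩ with hLdef
  set μmax := sortedEigs M ⟨0, hd⟩ with hmaxdef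
  set μmin := sortedEigs M ⟨d - 1, by omega⟩ with hmindef
  have hμmin : 0 < μmin := sortedEigs_pos_s12 hM _
  have hμmax : 0 < μmax := sortedEigs_pos_s12 hM _
  have hsj : 0 < sortedEigs A j := sortedEigs_pos_s12 hA j
  -- L ≥ μmin
  set w0 := w ⟨0, hd⟩ with hw0def
  have hw0 : A *ᵥ w0 = w0 := by rw [hw0def, hw, hAnorm, one_smul]
  have hw0n : w0 ⬝ᵥ w0 = 1 := by simpa using hworth ⟨0, hd⟩ ⟨0, hd⟩
  have hray : w0 ⬝ᵥ ((A * M * A) *ᵥ w0) ≤ L := by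
    have := rayleigh_le_s12 hd hAMA w0
    rwa [hw0n, mul_one] at this
  have hAMAw0 : (A * M * A) *ᵥ w0 = A *ᵥ (M *ᵥ w0) := by
    rw [← mulVec_mulVec, ← mulVec_mulVec, hw0]
  have h1 : w0 ⬝ᵥ (A *ᵥ (M *ᵥ w0)) = w0 ⬝ᵥ (M *ᵥ w0) := by
    rw [← herm_dot_swap hA.1, hw0]
  have h2 : μmin ≤ w0 ⬝ᵥ (M *ᵥ w0) := by
    have := rayleigh_ge hd hM.1 w0
    rwa [hw0n, mul_one] at this
  have hLmin : μmin ≤ L := by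
    rw [hAMAw0, h1] at hray; linarith
  have hLpos : 0 < L := lt_of_lt_of_le hμmin hLmin
  -- eigen relation
  have hkey : L * (q ⬝ᵥ w j) = sortedEigs A j * ((M *ᵥ (A *ᵥ q)) ⬝ᵥ w j) := by
    have e1 : ((A * M * A) *ᵥ q) ⬝ᵥ w j = L * (q ⬝ᵥ w j) := by
      rw [hq2, smul_dotProduct, smul_eq_mul]
    have e2 : (A * M * A) *ᵥ q = A *ᵥ (M *ᵥ (A *ᵥ q)) := by
      rw [← mulVec_mulVec, ← mulVec_mulVec]
    have e3 : (A *ᵥ (M *ᵥ (A *ᵥ q))) ⬝ᵥ w j = (M *ᵥ (A *ᵥ q)) ⬝ᵥ (A *ᵥ w j) :=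
      herm_dot_swap hA.1 _ _
    rw [← e1, e2, e3, hw j, dotProduct_smul, smul_eq_mul]
  set X := (M *ᵥ (A *ᵥ q)) ⬝ᵥ w j with hXdef
  have hAq : (A *ᵥ q) ⬝ᵥ (A *ᵥ q) ≤ 1 := by
    have := mulVec_dot_self_le hd hA.1 (fun i => (hA.eigenvalues_pos i).le) q
    rw [hAnorm, hq1] at this; simpa using this
  have hMu : (M *ᵥ (A *ᵥ q)) ⬝ᵥ (M *ᵥ (A *ᵥ q)) ≤ μmax ^ 2 := by
    have h := mulVec_dot_self_le hd hM.1 (fun i => (hM.eigenvalues_pos i).le) (A *ᵥ q)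
    nlinarith [sq_nonneg μmax]
  have hXsq : X * X ≤ μmax ^ 2 := by
    have hcs := dot_cs (M *ᵥ (A *ᵥ q)) (w j)
    have hww : w j ⬝ᵥ w j = 1 := by simpa using hworth j j
    rw [hww, mul_one] at hcs
    rw [hXdef]
    exact le_trans hcs hMu
  have hX : |X| ≤ μmax := by
    have := Real.sqrt_le_sqrt hXsq
    rwa [Real.sqrt_mul_self_eq_abs, show μmax ^ 2 = μmax * μmax by ring,
      Real.sqrt_mul_self hμmax.le] at this
  have hqw : |q ⬝ᵥ w j| / sortedEigs A j = |X| / L := by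
    have hq : q ⬝ᵥ w j = sortedEigs A j * X / L := by
      field_simp at hkey ⊢; linarith
    rw [hq, abs_div, abs_mul, abs_of_pos hsj, abs_of_pos hLpos]
    field_simp
  rw [hqw]
  have hk1 : (1 : ℝ) ≤ (k : ℝ) := by
    have : (2 : ℝ) ≤ (k : ℝ) := by exact_mod_cast hk
    linarith
  calc |X| / L ≤ μmax / L := by gcongr
  _ ≤ μmax / μmin := by gcongr
  _ ≤ (k : ℝ) * μmax / μmin := by
      gcongr
      exact le_mul_of_one_le_left hμmax.le hk1
end

section
/- Let D be a d × d real diagonal matrix with diagonal entries λ₁, …, λ_d and let ξ ∈ ℝᵈ. For ε ∈ ℝ and λ ∈ ℝ define F(λ, ε) = det( (Id + ε ξ⊗ξ)ᵀ D (Id + ε ξ⊗ξ) − λ·Id ). Then F(λ, ε) = ∏_{i=1}^{d} ( λ_i + 2ε λ_i ⟨ξ, e_i⟩² − λ ) + O(ε²) as ε → 0, uniformly for λ in any compact subset of ℝ; here e₁, …, e_d is the standard basis of ℝᵈ. -/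
open Matrix Polynomial

namespace Stmt19Aux

variable {R S : Type*} [CommRing R] [CommRing S]

lemma dvd_prod_sub_prod {ι : Type*} [DecidableEq ι] (s : Finset ι) (x : R) (f g : ι → R)
    (h : ∀ i ∈ s, x ∣ f i - g i) : x ∣ (∏ i ∈ s, f i) - ∏ i ∈ s, g i := by
  induction s using Finset.induction_on with
  | empty => simp
  | @insert a s ha ih =>
    rw [Finset.prod_insert ha, Finset.prod_insert ha]
    have key : f a * ∏ i ∈ s, f i - g a * ∏ i ∈ s, g i
        = f a * ((∏ i ∈ s, f i) - ∏ i ∈ s, g i) + (f a - g a) * ∏ i ∈ s, g i := by ring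
    rw [key]
    exact dvd_add (Dvd.dvd.mul_left (ih fun i hi => h i (Finset.mem_insert_of_mem hi)) _)
      (Dvd.dvd.mul_right (h a (Finset.mem_insert_self a s)) _)

lemma map_smul_ring {n : Type*} [Fintype n] (f : R →+* S) (r : R) (M : Matrix n n R) :
    (r • M).map f = f r • M.map f := by
  ext i j
  simp [Matrix.map_apply, smul_eq_mul]

lemma map_vecMulVec {n : Type*} [Fintype n] (f : R →+* S) (u v : n → R) :
    (vecMulVec u v).map f = vecMulVec (f ∘ u) (f ∘ v) := by
  ext i j
  simp [Matrix.map_apply, vecMulVec_apply]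

end Stmt19Aux

open Stmt19Aux

/-- determinant expansion. For a diagonal matrix `D = diagonal Λ` and
`ξ ∈ ℝᵈ`, let `F(lam, ε) = det((Id + ε ξ⊗ξ)ᵀ D (Id + ε ξ⊗ξ) − lam·Id)`. Then, uniformly for
`lam` in any compact subset `K ⊆ ℝ`,
`F(lam, ε) = Π_i (Λ_i + 2ε Λ_i ξ_i² − lam) + O(ε²)` as `ε → 0`. -/
theorem stmt19 (d : ℕ) (Λ : Fin d → ℝ) (ξ : Fin d → ℝ)
    (K : Set ℝ) (hK : IsCompact K) :
    ∃ C > (0 : ℝ), ∃ ε₀ > (0 : ℝ), ∀ lam ∈ K, ∀ ε : ℝ, |ε| ≤ ε₀ →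
      |Matrix.det
          ((1 + ε • vecMulVec ξ ξ)ᵀ * Matrix.diagonal Λ * (1 + ε • vecMulVec ξ ξ)
            - lam • (1 : Matrix (Fin d) (Fin d) ℝ))
        - ∏ i, (Λ i + 2 * ε * Λ i * (ξ i) ^ 2 - lam)| ≤ C * ε ^ 2 := by
  classical
  let φ0 : ℝ →+* (Polynomial (Polynomial ℝ)) := (Polynomial.C).comp (Polynomial.C)
  let v : Fin d → (Polynomial (Polynomial ℝ)) := fun i => φ0 (ξ i)
  let w : Fin d → (Polynomial (Polynomial ℝ)) := fun i => φ0 (Λ i)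
  let L : (Polynomial (Polynomial ℝ)) := Polynomial.C Polynomial.X
  let A : Matrix (Fin d) (Fin d) (Polynomial (Polynomial ℝ)) := vecMulVec v v
  let Dm : Matrix (Fin d) (Fin d) (Polynomial (Polynomial ℝ)) := Matrix.diagonal w
  let N : Matrix (Fin d) (Fin d) (Polynomial (Polynomial ℝ)) :=
    (1 + (Polynomial.X : (Polynomial (Polynomial ℝ))) • A)ᵀ * Dm * (1 + (Polynomial.X : (Polynomial (Polynomial ℝ))) • A) - L • 1
  let s0 : (Polynomial (Polynomial ℝ)) := ∑ k, w k * v k ^ 2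
  let T : (Polynomial (Polynomial ℝ)) := ∏ i, (w i + 2 * (Polynomial.X : (Polynomial (Polynomial ℝ))) * w i * v i ^ 2 - L)
  -- transpose symmetry
  have hA : Aᵀ = A := by
    ext i j
    simp [A, vecMulVec_apply, mul_comm]
  -- expansion of N
  have hNexp : N = (Dm - L • 1) + (Polynomial.X : (Polynomial (Polynomial ℝ))) • (A * Dm + Dm * A)
      + ((Polynomial.X : (Polynomial (Polynomial ℝ))) * (Polynomial.X : (Polynomial (Polynomial ℝ)))) • (A * Dm * A) := by
    show (1 + (Polynomial.X : (Polynomial (Polynomial ℝ))) • A)ᵀ * Dm * (1 + (Polynomial.X : (Polynomial (Polynomial ℝ))) • A) - L • 1 = _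
    rw [transpose_add, transpose_smul, transpose_one, hA]
    simp only [Matrix.add_mul, Matrix.mul_add, Matrix.smul_mul, Matrix.mul_smul,
      Matrix.one_mul, Matrix.mul_one, smul_smul]
    module
  -- entrywise formula
  have hN : ∀ i j, N i j = (if i = j then w i - L else 0)
      + (Polynomial.X : (Polynomial (Polynomial ℝ))) * (v i * v j * (w i + w j))
      + (Polynomial.X : (Polynomial (Polynomial ℝ))) * (Polynomial.X : (Polynomial (Polynomial ℝ))) * (v i * v j * s0) := by
    intro i j
    have hAD : (A * Dm) i j = v i * v j * w j := by
      simp [A, Dm, Matrix.mul_diagonal, vecMulVec_apply]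
    have hDA : (Dm * A) i j = w i * (v i * v j) := by
      simp [A, Dm, Matrix.diagonal_mul, vecMulVec_apply]
    have hADA : (A * Dm * A) i j = v i * v j * s0 := by
      rw [Matrix.mul_apply]
      have : ∀ k, (A * Dm) i k * A k j = v i * v j * (w k * v k ^ 2) := by
        intro k
        have : (A * Dm) i k = v i * v k * w k := by
          simp [A, Dm, Matrix.mul_diagonal, vecMulVec_apply]
        rw [this]
        simp [A, vecMulVec_apply]
        ring
      rw [Finset.sum_congr rfl fun k _ => this k, ← Finset.mul_sum]
    rw [hNexp]
    simp only [Matrix.add_apply, Matrix.sub_apply, Matrix.smul_apply, Matrix.add_apply,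
      Matrix.diagonal_apply, Matrix.one_apply, hADA, smul_eq_mul]
    rw [hAD, hDA]
    by_cases hij : i = j
    · subst hij
      rw [if_pos rfl, if_pos rfl]
      simp only [Dm, Matrix.diagonal_apply_eq]
      ring
    · rw [if_neg hij, if_neg hij]
      simp only [Dm, Matrix.diagonal_apply_ne _ hij]
      ring
  -- divisibility
  have hdvd : (Polynomial.X : (Polynomial (Polynomial ℝ))) ^ 2 ∣ N.det - T := by
    rw [Matrix.det_apply]
    rw [← Finset.sum_erase_add _ _ (Finset.mem_univ (1 : Equiv.Perm (Fin d)))]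
    have h1 : Equiv.Perm.sign (1 : Equiv.Perm (Fin d)) • ∏ i, N ((1 : Equiv.Perm (Fin d)) i) i
        = ∏ i, N i i := by simp
    rw [h1, add_sub_assoc]
    refine dvd_add (Finset.dvd_sum ?_) ?_
    · intro σ hσ
      have hσ1 : σ ≠ 1 := Finset.ne_of_mem_erase hσ
      obtain ⟨i, hi⟩ : ∃ i, σ i ≠ i := by
        by_contra h
        push_neg at h
        exact hσ1 (Equiv.ext h)
      set j := σ i with hj
      have hji : j ≠ i := hi
      have hsj : σ j ≠ j := fun h => hi (σ.injective h)
      have hXi : (Polynomial.X : (Polynomial (Polynomial ℝ))) ∣ N (σ i) i := by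
        rw [hN (σ i) i, if_neg hi]
        exact ⟨v (σ i) * v i * (w (σ i) + w i) + (Polynomial.X : (Polynomial (Polynomial ℝ))) * (v (σ i) * v i * s0), by ring⟩
      have hXj : (Polynomial.X : (Polynomial (Polynomial ℝ))) ∣ N (σ j) j := by
        rw [hN (σ j) j, if_neg hsj]
        exact ⟨v (σ j) * v j * (w (σ j) + w j) + (Polynomial.X : (Polynomial (Polynomial ℝ))) * (v (σ j) * v j * s0), by ring⟩
      have hpair : (Polynomial.X : (Polynomial (Polynomial ℝ))) ^ 2 ∣ ∏ k, N (σ k) k := by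
        have hsub : ({i, j} : Finset (Fin d)) ⊆ Finset.univ := Finset.subset_univ _
        have hprodpair : (∏ k ∈ ({i, j} : Finset (Fin d)), N (σ k) k)
            = N (σ i) i * N (σ j) j := Finset.prod_pair (Ne.symm hji)
        have := Finset.prod_dvd_prod_of_subset _ _ (fun k => N (σ k) k) hsub
        rw [hprodpair] at this
        calc (Polynomial.X : (Polynomial (Polynomial ℝ))) ^ 2 = (Polynomial.X : (Polynomial (Polynomial ℝ))) * (Polynomial.X : (Polynomial (Polynomial ℝ))) := sq _
          _ ∣ N (σ i) i * N (σ j) j := mul_dvd_mul hXi hXj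
          _ ∣ ∏ k, N (σ k) k := this
      rw [Units.smul_def, zsmul_eq_mul]
      exact hpair.mul_left _
    · refine dvd_prod_sub_prod Finset.univ _ _ _ ?_
      intro i _
      refine ⟨v i * v i * s0, ?_⟩
      rw [hN i i, if_pos rfl]
      ring
  obtain ⟨Qp, hQp⟩ := hdvd
  -- continuity of the evaluated cofactor
  set n := Qp.natDegree + 1 with hn
  let H : ℝ × ℝ → ℝ := fun p => ∑ k ∈ Finset.range n, (Qp.coeff k).eval p.1 * p.2 ^ k
  have hHcont : Continuous H := by
    refine continuous_finset_sum _ fun k _ => ?_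
    exact ((Qp.coeff k).continuous_aeval.comp continuous_fst).mul (continuous_snd.pow k)
  have hHeval : ∀ lam ε : ℝ, Polynomial.eval₂ (Polynomial.evalRingHom lam) ε Qp = H (lam, ε) := by
    intro lam ε
    rw [Polynomial.eval₂_eq_sum_range]
    rfl
  obtain ⟨C0, hC0⟩ := (hK.prod (isCompact_Icc (a := (-1:ℝ)) (b := 1))).exists_bound_of_continuousOn hHcont.continuousOn
  refine ⟨max C0 0 + 1, by positivity, 1, one_pos, ?_⟩
  intro lam hlam ε hε
  -- the evaluation ring hom
  let φ : (Polynomial (Polynomial ℝ)) →+* ℝ := Polynomial.eval₂RingHom (Polynomial.evalRingHom lam) ε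
  have hφX : φ (Polynomial.X : (Polynomial (Polynomial ℝ))) = ε := by
    simp [φ, coe_eval₂RingHom]
  have hφ0 : ∀ r : ℝ, φ (φ0 r) = r := by
    intro r
    simp [φ, φ0, coe_eval₂RingHom]
  have hφL : φ L = lam := by
    simp [φ, L, coe_eval₂RingHom]
  -- mapping matrices
  have hmapmul : ∀ P Q : Matrix (Fin d) (Fin d) (Polynomial (Polynomial ℝ)), (P * Q).map φ = P.map φ * Q.map φ := by
    intro P Q
    simpa [RingHom.mapMatrix_apply] using map_mul φ.mapMatrix P Q
  have hmapsub : ∀ P Q : Matrix (Fin d) (Fin d) (Polynomial (Polynomial ℝ)), (P - Q).map φ = P.map φ - Q.map φ := by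
    intro P Q
    simpa [RingHom.mapMatrix_apply] using map_sub φ.mapMatrix P Q
  have hmapadd : ∀ P Q : Matrix (Fin d) (Fin d) (Polynomial (Polynomial ℝ)), (P + Q).map φ = P.map φ + Q.map φ := by
    intro P Q
    simpa [RingHom.mapMatrix_apply] using map_add φ.mapMatrix P Q
  have hmapone : (1 : Matrix (Fin d) (Fin d) (Polynomial (Polynomial ℝ))).map φ = 1 := by
    simpa [RingHom.mapMatrix_apply] using map_one φ.mapMatrix
  have hmapA : A.map φ = vecMulVec ξ ξ := by
    have hv : ⇑φ ∘ v = ξ := funext fun i => hφ0 _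
    rw [map_vecMulVec, hv]
  have hmapD : Dm.map φ = Matrix.diagonal Λ := by
    rw [Matrix.diagonal_map (map_zero φ)]
    exact congrArg Matrix.diagonal (funext fun i => hφ0 _)
  have hmapN : N.map φ = (1 + ε • vecMulVec ξ ξ)ᵀ * Matrix.diagonal Λ * (1 + ε • vecMulVec ξ ξ)
      - lam • (1 : Matrix (Fin d) (Fin d) ℝ) := by
    show ((1 + (Polynomial.X : (Polynomial (Polynomial ℝ))) • A)ᵀ * Dm * (1 + (Polynomial.X : (Polynomial (Polynomial ℝ))) • A) - L • 1).map φ = _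
    rw [hmapsub, hmapmul, hmapmul, map_smul_ring, hmapone, hφL, Matrix.transpose_map,
      hmapadd, map_smul_ring, hmapone, hmapA, hφX, hmapD]
  have hφT : φ T = ∏ i, (Λ i + 2 * ε * Λ i * (ξ i) ^ 2 - lam) := by
    rw [map_prod]
    refine Finset.prod_congr rfl fun i _ => ?_
    simp [T, w, v, L, φ, φ0, coe_eval₂RingHom, eval₂_pow]
  have hdet : Matrix.det ((1 + ε • vecMulVec ξ ξ)ᵀ * Matrix.diagonal Λ * (1 + ε • vecMulVec ξ ξ)
      - lam • (1 : Matrix (Fin d) (Fin d) ℝ)) - ∏ i, (Λ i + 2 * ε * Λ i * (ξ i) ^ 2 - lam)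
      = ε ^ 2 * H (lam, ε) := by
    have hNdet : φ N.det
        = Matrix.det ((1 + ε • vecMulVec ξ ξ)ᵀ * Matrix.diagonal Λ * (1 + ε • vecMulVec ξ ξ)
          - lam • (1 : Matrix (Fin d) (Fin d) ℝ)) := by
      rw [RingHom.map_det, RingHom.mapMatrix_apply, hmapN]
    rw [← hNdet, ← hφT, ← map_sub φ, hQp]
    rw [_root_.map_mul, map_pow, hφX]
    rw [show φ Qp = Polynomial.eval₂ (Polynomial.evalRingHom lam) ε Qp from rfl, hHeval]
  rw [hdet, abs_mul, abs_pow]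
  have habs : |H (lam, ε)| ≤ C0 := by
    have := hC0 (lam, ε) ⟨hlam, by constructor <;> [linarith [neg_abs_le ε]; linarith [le_abs_self ε]]⟩
    simpa [Real.norm_eq_abs] using this
  have h1 : |ε| ^ 2 = ε ^ 2 := sq_abs ε
  rw [h1]
  calc ε ^ 2 * |H (lam, ε)| ≤ ε ^ 2 * (max C0 0 + 1) := by
        apply mul_le_mul_of_nonneg_left _ (sq_nonneg ε)
        have h2 : C0 ≤ max C0 0 + 1 := by
          have := le_max_left C0 0
          linarith
        exact habs.trans h2
    _ = (max C0 0 + 1) * ε ^ 2 := by ring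
end
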